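/- arXiv:2205.15205 — 11 statements merged into one kernel-verified Lean document; each statement's English description precedes it below -/
import Mathlib

section
/- Let G be a finite group and let N be a normal regular subgroup of Hol(G). For each x ∈ G let n_x denote the unique element of N with n_x(1) = x, and define γ(x): G → G by γ(x)(z) = n_x(z)·x⁻¹. Then: (i) γ(x) is an automorphism of G for every x ∈ G; (ii) γ(xy)(z) = γ(x)(γ(y)(z)) for all x, y, z ∈ G (i.e., γ is an anti-homomorphism G → Aut(G) in the left-to-right composition convention); (iii) γ(β(x))(β(z)) = β(γ(x)(z)) for all x, z ∈ G and every automorphism β of G. -/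
/-- The image of the right regular representation `ρ : G → S(G)`, `ρ(y)(x) = x·y`,
as a subgroup of the symmetric group on `G`. -/
def RhoSubgroup (G : Type*) [Group G] : Subgroup (Equiv.Perm G) where
  carrier := {f : Equiv.Perm G | ∃ y : G, ∀ x : G, f x = x * y}
  one_mem' := ⟨1, fun x => (mul_one x).symm⟩
  mul_mem' := by
    rintro f g ⟨a, ha⟩ ⟨b, hb⟩
    refine ⟨b * a, fun x => ?_⟩
    simp only [Equiv.Perm.mul_apply, ha, hb, mul_assoc]
  inv_mem' := by
    rintro f ⟨a, ha⟩
    refine ⟨a⁻¹, fun x => ?_⟩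
    have h : f (x * a⁻¹) = x := by rw [ha]; simp
    conv_lhs => rw [← h]
    simp

/-- The holomorph `Hol(G) = N_{S(G)}(ρ(G))`. -/
def Hol (G : Type*) [Group G] : Subgroup (Equiv.Perm G) := Subgroup.normalizer (RhoSubgroup G : Set (Equiv.Perm G))

lemma rho_mem {G : Type*} [Group G] (y : G) :
    (Equiv.mulRight y : Equiv.Perm G) ∈ RhoSubgroup G := ⟨y, fun _ => rfl⟩

/-- Key property: any element of the holomorph is a "twisted homomorphism". -/
lemma hol_key {G : Type*} [Group G] {π : Equiv.Perm G} (hπ : π ∈ Hol G) (z y : G) :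
    π (z * y) = π z * ((π 1)⁻¹ * π y) := by
  have h1 : π * (Equiv.mulRight y : Equiv.Perm G) * π⁻¹ ∈ RhoSubgroup G :=
    ((Subgroup.mem_normalizer_iff.mp hπ) _).mp (rho_mem y)
  obtain ⟨c, hc⟩ := h1
  have key : ∀ w : G, π (w * y) = π w * c := by
    intro w
    have := hc (π w)
    simpa [Equiv.Perm.mul_apply] using this
  have hcy : c = (π 1)⁻¹ * π y := by
    have h := key 1
    rw [one_mul] at h
    rw [h]; group
  rw [key z, hcy]

/-- for a normal regular subgroup `N` of `Hol(G)`, writing `n_x` for the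
unique element of `N` with `n_x(1) = x` and `γ(x)(z) = n_x(z)·x⁻¹`, the map `γ(x)` is an
automorphism of `G` for every `x`, `γ` is an anti-homomorphism `G → Aut(G)` (in the
left-to-right composition convention), and `γ` is `Aut(G)`-equivariant. -/
theorem stmt_2 {G : Type*} [Group G] [Fintype G]
    (N : Subgroup (Equiv.Perm G)) (hle : N ≤ Hol G)
    (hnormal : (N.subgroupOf (Hol G)).Normal)
    (hreg : ∀ x y : G, ∃! f : Equiv.Perm G, f ∈ N ∧ f x = y)
    (nn : G → Equiv.Perm G) (hmem : ∀ x : G, nn x ∈ N) (hone : ∀ x : G, nn x 1 = x) :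
    (∀ x : G, Function.Bijective (fun z : G => nn x z * x⁻¹) ∧
      ∀ a b : G, nn x (a * b) * x⁻¹ = (nn x a * x⁻¹) * (nn x b * x⁻¹)) ∧
    (∀ x y z : G, nn (x * y) z * (x * y)⁻¹ = nn x (nn y z * y⁻¹) * x⁻¹) ∧
    (∀ (β : G ≃* G) (x z : G), nn (β x) (β z) * (β x)⁻¹ = β (nn x z * x⁻¹)) := by
  have huniq : ∀ (f g : Equiv.Perm G), f ∈ N → g ∈ N → ∀ t : G, f t = g t → f = g := by
    intro f g hf hg t h
    exact (hreg t (g t)).unique ⟨hf, h⟩ ⟨hg, rfl⟩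
  have hmemHol : ∀ x : G, nn x ∈ Hol G := fun x => hle (hmem x)
  have hmul : ∀ x z y : G, nn x (z * y) = nn x z * (x⁻¹ * nn x y) := by
    intro x z y
    have h := hol_key (hmemHol x) z y
    rwa [hone] at h
  have hconj : ∀ (h : Equiv.Perm G), h ∈ Hol G → ∀ n ∈ N, h * n * h⁻¹ ∈ N := by
    intro h hh n hn
    have := hnormal.conj_mem ⟨n, hle hn⟩ (Subgroup.mem_subgroupOf.mpr hn) ⟨h, hh⟩
    exact Subgroup.mem_subgroupOf.mp this
  refine ⟨?_, ?_, ?_⟩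
  · intro x
    constructor
    · have h : (fun z : G => nn x z * x⁻¹) =
          ((nn x).trans (Equiv.mulRight x⁻¹) : G ≃ G) := rfl
      rw [h]; exact Equiv.bijective _
    · intro a b
      rw [hmul x a b]; group
  · intro x y z
    have hρ : (Equiv.mulRight y : Equiv.Perm G) ∈ Hol G :=
      Subgroup.le_normalizer (rho_mem y)
    set m : Equiv.Perm G :=
      (Equiv.mulRight y : Equiv.Perm G) * nn x * (Equiv.mulRight y : Equiv.Perm G)⁻¹ * nn y
      with hm
    have hmN : m ∈ N := N.mul_mem (hconj _ hρ _ (hmem x)) (hmem y)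
    have happ : ∀ w : G, m w = nn x (nn y w * y⁻¹) * y := by
      intro w
      simp [hm, Equiv.Perm.mul_apply, Equiv.Perm.inv_def]
    have hm1 : m 1 = x * y := by
      rw [happ 1, hone, mul_inv_cancel, hone]
    have heq : nn (x * y) = m :=
      huniq _ _ (hmem (x * y)) hmN 1 (by rw [hone, hm1])
    have hz : nn (x * y) z = nn x (nn y z * y⁻¹) * y := by rw [heq, happ]
    rw [hz]; group
  · intro β x z
    have hb : (β.toEquiv : Equiv.Perm G) ∈ Hol G := by
      rw [Hol, Subgroup.mem_normalizer_iff]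
      intro f
      constructor
      · rintro ⟨c, hc⟩
        refine ⟨β c, fun w => ?_⟩
        simp [Equiv.Perm.mul_apply, Equiv.Perm.inv_def, hc, map_mul]
      · rintro ⟨c, hc⟩
        refine ⟨β.symm c, fun w => ?_⟩
        have h := hc (β w)
        simp only [Equiv.Perm.mul_apply, Equiv.Perm.inv_def] at h
        have h2 : β (f w) = β w * c := by
          simpa using h
        have := congrArg β.symm h2
        simpa [map_mul] using this
    set b : Equiv.Perm G := β.toEquiv with hbdef
    have hconjN : b * nn x * b⁻¹ ∈ N := hconj _ hb _ (hmem x)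
    have happ : ∀ w : G, (b * nn x * b⁻¹) w = β (nn x (β.symm w)) := by
      intro w
      simp [hbdef, Equiv.Perm.mul_apply, Equiv.Perm.inv_def]
    have h1 : (b * nn x * b⁻¹) 1 = β x := by
      rw [happ 1]
      simp [hone]
    have heq : nn (β x) = b * nn x * b⁻¹ :=
      huniq _ _ (hmem (β x)) hconjN 1 (by rw [hone, h1])
    have hz : nn (β x) (β z) = β (nn x z) := by
      rw [heq, happ]
      simp
    rw [hz, ← map_inv, ← map_mul]
end

section
/- Let G be a finite group and let γ: G → Aut(G) be a map satisfying γ(xy)(z) = γ(x)(γ(y)(z)) for all x, y, z ∈ G and γ(β(x))(β(z)) = β(γ(x)(z)) for all x, z ∈ G and all automorphisms β of G. Define x ∘ y = γ(y)(x)·y. Then: (i) ∘ is a group operation on the underlying set of G whose identity element coincides with the identity of G; (ii) every automorphism β of G satisfies β(x ∘ y) = β(x) ∘ β(y) for all x, y ∈ G; and (iii) (x·y) ∘ z = (x ∘ z)·z⁻¹·(y ∘ z) for all x, y, z ∈ G, where z⁻¹ denotes the inverse of z in G. -/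
/-- The circle operation `x ∘ y = γ(y)(x) · y` associated to a map `γ : G → Aut(G)`. -/
def circOp {G : Type*} [Group G] (γ : G → G ≃* G) (x y : G) : G := γ y x * y

/-- if `γ : G → Aut(G)` is an anti-homomorphism (in the left-to-right
composition convention) that is equivariant with respect to `Aut(G)`, then
`x ∘ y = γ(y)(x)·y` is a group operation on `G` with the same identity as `G`,
every automorphism of `G` is an automorphism of `(G, ∘)`, and
`(x·y) ∘ z = (x ∘ z)·z⁻¹·(y ∘ z)`. -/
theorem stmt_3 {G : Type*} [Group G] [Fintype G] (γ : G → G ≃* G)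
    (h1 : ∀ x y z : G, γ (x * y) z = γ x (γ y z))
    (h2 : ∀ (β : G ≃* G) (x z : G), γ (β x) (β z) = β (γ x z)) :
    ((∀ x y z : G, circOp γ (circOp γ x y) z = circOp γ x (circOp γ y z)) ∧
      (∀ x : G, circOp γ 1 x = x) ∧ (∀ x : G, circOp γ x 1 = x) ∧
      (∀ x : G, ∃ y : G, circOp γ x y = 1 ∧ circOp γ y x = 1)) ∧
    (∀ (β : G ≃* G) (x y : G), β (circOp γ x y) = circOp γ (β x) (β y)) ∧
    (∀ x y z : G, circOp γ (x * y) z = circOp γ x z * z⁻¹ * circOp γ y z) := by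
  have gamma_one : ∀ x : G, γ 1 x = x := by
    intro x
    have h := h1 1 1 x
    rw [one_mul] at h
    exact (γ 1).injective h.symm
  have assoc : ∀ x y z : G, circOp γ (circOp γ x y) z = circOp γ x (circOp γ y z) := by
    intro x y z
    simp only [circOp, map_mul, h1, h2]
    simp [mul_assoc]
  have one_left : ∀ x : G, circOp γ 1 x = x := by
    intro x; simp [circOp]
  have one_right : ∀ x : G, circOp γ x 1 = x := by
    intro x; simp [circOp, gamma_one]
  have left_inv : ∀ x : G, ∃ y : G, circOp γ y x = 1 := by
    intro x
    have hinj : Function.Injective (fun t => circOp γ t x) := by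
      intro a b hab
      simp only [circOp] at hab
      exact (γ x).injective (mul_right_cancel hab)
    exact Finite.injective_iff_surjective.mp hinj 1
  have inv_ex : ∀ x : G, ∃ y : G, circOp γ x y = 1 ∧ circOp γ y x = 1 := by
    intro x
    obtain ⟨y, hy⟩ := left_inv x
    obtain ⟨w, hw⟩ := left_inv y
    refine ⟨y, ?_, hy⟩
    calc circOp γ x y = circOp γ (circOp γ w y) (circOp γ x y) := by rw [hw, one_left]
      _ = circOp γ w (circOp γ (circOp γ y x) y) := by rw [assoc, ← assoc y x y]
      _ = 1 := by rw [hy, one_left, hw]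
  refine ⟨⟨assoc, one_left, one_right, inv_ex⟩, ?_, ?_⟩
  · intro β x y
    simp [circOp, map_mul, h2]
  · intro x y z
    simp [circOp, map_mul, mul_assoc]
end

section
/- Let G be a finite group and let γ: G → Aut(G) be a map satisfying γ(xy)(z) = γ(x)(γ(y)(z)) for all x, y, z ∈ G and γ(β(x))(β(z)) = β(γ(x)(z)) for all x, z ∈ G and all automorphisms β of G. For each x ∈ G define the permutation ν(x) ∈ S(G) by ν(x)(z) = γ(x)(z)·x, and set x ∘ y = γ(y)(x)·y. Then N = {ν(x) : x ∈ G} is a normal regular subgroup of Hol(G), and the map x ↦ ν(x) is a group isomorphism from (G, ∘) onto N. -/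
/-- The permutation `ν(x) : z ↦ γ(x)(z)·x` of `G`. -/
def nuPerm {G : Type*} [Group G] (γ : G → G ≃* G) (x : G) : Equiv.Perm G :=
  (γ x).toEquiv.trans (Equiv.mulRight x)

section Aux

variable {G : Type*} [Group G] (γ : G → G ≃* G)

theorem mem_rho (f : Equiv.Perm G) : f ∈ RhoSubgroup G ↔ ∃ y : G, ∀ x : G, f x = x * y :=
  Iff.rfl

theorem nu_apply (x z : G) : nuPerm γ x z = γ x z * x := rfl

theorem nu_inv_apply (x z : G) : (nuPerm γ x)⁻¹ z = (γ x).symm (z * x⁻¹) := rfl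

theorem nu_one_apply (x : G) : nuPerm γ x 1 = x := by simp [nu_apply]

theorem nu_injective : Function.Injective (nuPerm γ) := fun a b h => by
  have := congrArg (fun f : Equiv.Perm G => f 1) h
  simpa [nu_one_apply] using this

theorem gamma_one (h1 : ∀ x y z : G, γ (x * y) z = γ x (γ y z)) (z : G) : γ 1 z = z :=
  ((γ 1).injective (by have := h1 1 1 z; rwa [mul_one] at this)).symm

theorem gamma_inv_cancel (h1 : ∀ x y z : G, γ (x * y) z = γ x (γ y z)) (y z : G) :
    γ y⁻¹ (γ y z) = z := by
  rw [← h1, inv_mul_cancel, gamma_one γ h1]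

theorem nu_one (h1 : ∀ x y z : G, γ (x * y) z = γ x (γ y z)) : nuPerm γ 1 = 1 :=
  Equiv.ext fun z => by simp [nu_apply, gamma_one γ h1]

theorem nu_circ (h1 : ∀ x y z : G, γ (x * y) z = γ x (γ y z))
    (h2 : ∀ (β : G ≃* G) (x z : G), γ (β x) (β z) = β (γ x z)) (x y : G) :
    nuPerm γ (circOp γ x y) = nuPerm γ y * nuPerm γ x := by
  ext z
  rw [Equiv.Perm.mul_apply, nu_apply, nu_apply, nu_apply, circOp, h1, h2, map_mul, ← mul_assoc]

theorem conj_by_aut (h2 : ∀ (β : G ≃* G) (x z : G), γ (β x) (β z) = β (γ x z))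
    (β : G ≃* G) (x : G) :
    (β.toEquiv : Equiv.Perm G) * nuPerm γ x * (β.toEquiv : Equiv.Perm G)⁻¹ = nuPerm γ (β x) := by
  ext z
  have h := h2 β x (β.symm z)
  rw [MulEquiv.apply_symm_apply] at h
  have hz : (β.toEquiv : Equiv.Perm G)⁻¹ z = β.symm z := rfl
  rw [Equiv.Perm.mul_apply, Equiv.Perm.mul_apply, hz, nu_apply, nu_apply]
  show β _ = _
  rw [map_mul, ← h]

theorem gamma_B (h1 : ∀ x y z : G, γ (x * y) z = γ x (γ y z))
    (h2 : ∀ (β : G ≃* G) (x z : G), γ (β x) (β z) = β (γ x z)) (w y z : G) :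
    γ (γ w y⁻¹ * w * y) z = γ w z := by
  rw [mul_assoc, h1, h1, h2 (γ w) y⁻¹ (γ y z), gamma_inv_cancel γ h1]

theorem conj_by_rho (h1 : ∀ x y z : G, γ (x * y) z = γ x (γ y z))
    (h2 : ∀ (β : G ≃* G) (x z : G), γ (β x) (β z) = β (γ x z)) (y x : G) :
    (Equiv.mulRight y : Equiv.Perm G) * nuPerm γ x * (Equiv.mulRight y : Equiv.Perm G)⁻¹ =
      nuPerm γ (γ x y⁻¹ * x * y) := by
  ext z
  have hz : (Equiv.mulRight y : Equiv.Perm G)⁻¹ z = z * y⁻¹ := by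
    simp [Equiv.Perm.inv_def]
  rw [Equiv.Perm.mul_apply, Equiv.Perm.mul_apply, hz, nu_apply, nu_apply, gamma_B γ h1 h2]
  show γ x (z * y⁻¹) * x * y = γ x z * (γ x y⁻¹ * x * y)
  rw [map_mul]
  group

/-- Conjugation by any element of the holomorph maps `ν(x)` to some `ν(x')`. -/
theorem conj_mem_range [Finite G]
    (h1 : ∀ x y z : G, γ (x * y) z = γ x (γ y z))
    (h2 : ∀ (β : G ≃* G) (x z : G), γ (β x) (β z) = β (γ x z))
    (g : Equiv.Perm G) (hg : g ∈ Hol G) (x : G) :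
    ∃ x' : G, g * nuPerm γ x * g⁻¹ = nuPerm γ x' := by
  set y : G := g 1 with hy
  set σf : G → G := fun a => y⁻¹ * g a with hσf
  have key : ∀ a w : G, g (w * a) = g w * σf a := by
    intro a
    have hmem : (Equiv.mulRight a : Equiv.Perm G) ∈ RhoSubgroup G := ⟨a, fun _ => rfl⟩
    obtain ⟨b, hb⟩ := (Subgroup.mem_normalizer_iff.mp hg (Equiv.mulRight a)).mp hmem
    have hb' : ∀ w : G, g (w * a) = g w * b := by
      intro w
      have := hb (g w)
      simpa [Equiv.Perm.mul_apply] using this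
    have hba : b = σf a := by
      have h0 := hb' 1
      rw [one_mul] at h0
      show b = y⁻¹ * g a
      rw [h0, hy]
      group
    intro w
    rw [hb' w, hba]
  have hσmul : ∀ a b : G, σf (a * b) = σf a * σf b := by
    intro a b
    have e1 : g (a * b) = g a * σf b := key b a
    have e2 : g a = g 1 * σf a := by have := key a 1; rwa [one_mul] at this
    have e3 : g (a * b) = g 1 * σf (a * b) := by
      have := key (a * b) 1; rwa [one_mul] at this
    have : g 1 * σf (a * b) = g 1 * (σf a * σf b) := by
      rw [← e3, e1, e2]; group
    exact mul_left_cancel this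
  have hσinj : Function.Injective σf := by
    intro a b h
    apply g.injective
    have : y * (y⁻¹ * g a) = y * (y⁻¹ * g b) := by rw [show (y⁻¹ * g a) = σf a from rfl,
      show (y⁻¹ * g b) = σf b from rfl, h]
    simpa [mul_inv_cancel_left] using this
  have hσbij : Function.Bijective σf := Finite.injective_iff_bijective.mp hσinj
  set σ : G ≃* G := MulEquiv.ofBijective (MonoidHom.mk' σf hσmul) hσbij with hσdef
  have hσ : ∀ a, σ a = σf a := fun a => rfl
  have hgz : ∀ z, g z = y * σ z := by
    intro z
    have := key z 1
    rw [one_mul] at this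
    rw [this, hσ]
  have hdecomp : g = (Equiv.mulRight y : Equiv.Perm G) *
      ((MulAut.conj y : G ≃* G).toEquiv : Equiv.Perm G) * (σ.toEquiv : Equiv.Perm G) := by
    ext z
    rw [Equiv.Perm.mul_apply, Equiv.Perm.mul_apply, hgz z]
    show y * σ z = (y * σ z * y⁻¹) * y
    group
  refine ⟨γ ((MulAut.conj y : G ≃* G) (σ x)) y⁻¹ * ((MulAut.conj y : G ≃* G) (σ x)) * y, ?_⟩
  have e1 := conj_by_aut γ h2 σ x
  have e2 := conj_by_aut γ h2 (MulAut.conj y : G ≃* G) (σ x)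
  have e3 := conj_by_rho γ h1 h2 y ((MulAut.conj y : G ≃* G) (σ x))
  calc g * nuPerm γ x * g⁻¹
      = (Equiv.mulRight y : Equiv.Perm G) *
          (((MulAut.conj y : G ≃* G).toEquiv : Equiv.Perm G) *
            ((σ.toEquiv : Equiv.Perm G) * nuPerm γ x * (σ.toEquiv : Equiv.Perm G)⁻¹) *
            ((MulAut.conj y : G ≃* G).toEquiv : Equiv.Perm G)⁻¹) *
          (Equiv.mulRight y : Equiv.Perm G)⁻¹ := by
        rw [hdecomp]; group
    _ = nuPerm γ _ := by rw [e1, e2, e3]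

end Aux

/-- given an `Aut(G)`-equivariant anti-homomorphism `γ : G → Aut(G)`,
the set `N = {ν(x) : x ∈ G}`, where `ν(x)(z) = γ(x)(z)·x`, is a normal regular subgroup
of `Hol(G)`, and `x ↦ ν(x)` is an isomorphism from the circle group `(G, ∘)` onto `N`
(in the left-to-right composition convention, i.e. `ν(x ∘ y)(z) = ν(y)(ν(x)(z))`). -/
theorem stmt_4 {G : Type*} [Group G] [Fintype G] (γ : G → G ≃* G)
    (h1 : ∀ x y z : G, γ (x * y) z = γ x (γ y z))
    (h2 : ∀ (β : G ≃* G) (x z : G), γ (β x) (β z) = β (γ x z)) :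
    ∃ N : Subgroup (Equiv.Perm G),
      (∀ f : Equiv.Perm G, f ∈ N ↔ ∃ x : G, f = nuPerm γ x) ∧
      N ≤ Hol G ∧ (N.subgroupOf (Hol G)).Normal ∧
      (∀ x y : G, ∃! f : Equiv.Perm G, f ∈ N ∧ f x = y) ∧
      Function.Injective (nuPerm γ) ∧
      (∀ x y z : G, nuPerm γ (circOp γ x y) z = nuPerm γ y (nuPerm γ x z)) := by
  classical
  -- closure properties of the range of ν
  have onemem : (1 : Equiv.Perm G) ∈ Set.range (nuPerm γ) := ⟨1, nu_one γ h1⟩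
  have mulmem : ∀ {f g : Equiv.Perm G}, f ∈ Set.range (nuPerm γ) →
      g ∈ Set.range (nuPerm γ) → f * g ∈ Set.range (nuPerm γ) := by
    rintro _ _ ⟨a, rfl⟩ ⟨b, rfl⟩
    exact ⟨circOp γ b a, nu_circ γ h1 h2 b a⟩
  have powmem : ∀ (f : Equiv.Perm G), f ∈ Set.range (nuPerm γ) →
      ∀ n : ℕ, f ^ n ∈ Set.range (nuPerm γ) := by
    intro f hf n
    induction n with
    | zero => simpa using onemem
    | succ n ih => rw [pow_succ]; exact mulmem ih hf
  have invmem : ∀ (f : Equiv.Perm G), f ∈ Set.range (nuPerm γ) →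
      f⁻¹ ∈ Set.range (nuPerm γ) := by
    intro f hf
    have hfin : Finite (Equiv.Perm G) := inferInstance
    have hpos : 0 < orderOf f := orderOf_pos f
    have hpow : f ^ orderOf f = 1 := pow_orderOf_eq_one f
    have : f⁻¹ = f ^ (orderOf f - 1) := by
      refine (eq_inv_of_mul_eq_one_left ?_).symm
      rw [← pow_succ, Nat.sub_add_cancel hpos, hpow]
    rw [this]
    exact powmem f hf _
  set N : Subgroup (Equiv.Perm G) :=
    { carrier := Set.range (nuPerm γ)
      one_mem' := onemem
      mul_mem' := fun hf hg => mulmem hf hg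
      inv_mem' := fun hf => invmem _ hf } with hN
  have memN : ∀ f : Equiv.Perm G, f ∈ N ↔ ∃ x : G, f = nuPerm γ x := by
    intro f
    constructor
    · rintro ⟨x, rfl⟩; exact ⟨x, rfl⟩
    · rintro ⟨x, rfl⟩; exact ⟨x, rfl⟩
  -- N ≤ Hol G
  have hle : N ≤ Hol G := by
    rintro f ⟨x, rfl⟩
    rw [Hol, Subgroup.mem_normalizer_iff]
    intro h
    constructor
    · rintro ⟨a, ha⟩
      refine ⟨x⁻¹ * γ x a * x, fun z => ?_⟩
      rw [Equiv.Perm.mul_apply, Equiv.Perm.mul_apply, nu_inv_apply, ha, nu_apply, map_mul,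
        MulEquiv.apply_symm_apply]
      group
    · rintro ⟨b, hb⟩
      refine ⟨(γ x).symm (x * b * x⁻¹), fun z => ?_⟩
      have := hb (nuPerm γ x z)
      rw [Equiv.Perm.mul_apply, Equiv.Perm.mul_apply, Equiv.Perm.inv_def, Equiv.symm_apply_apply] at this
      -- this : nuPerm γ x (h z) = nuPerm γ x z * b
      have h2' : γ x (h z) * x = γ x z * x * b := by
        rw [← nu_apply, this, nu_apply]
      have h3 : γ x (h z) = γ x z * (x * b * x⁻¹) := by
        have := mul_right_cancel (b := x) (a := γ x (h z))
          (c := γ x z * (x * b * x⁻¹)) ?_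
        · exact this
        · rw [h2']; group
      calc h z = (γ x).symm (γ x (h z)) := ((γ x).symm_apply_apply _).symm
        _ = (γ x).symm (γ x z * (x * b * x⁻¹)) := by rw [h3]
        _ = z * (γ x).symm (x * b * x⁻¹) := by rw [map_mul, MulEquiv.symm_apply_apply]
  -- normality
  have hnormal : (N.subgroupOf (Hol G)).Normal := by
    constructor
    intro n hn g
    rw [Subgroup.mem_subgroupOf] at hn ⊢
    obtain ⟨x, hx⟩ := (memN _).mp hn
    have : ((g * n * g⁻¹ : Hol G) : Equiv.Perm G) = (g : Equiv.Perm G) * (n : Equiv.Perm G) *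
        (g : Equiv.Perm G)⁻¹ := by push_cast; ring_nf
    rw [this, hx]
    obtain ⟨x', hx'⟩ := conj_mem_range γ h1 h2 (g : Equiv.Perm G) g.2 x
    rw [hx']
    exact ⟨x', rfl⟩
  -- regularity
  have hx1 : ∀ a : G, (nuPerm γ a)⁻¹ a = 1 := fun a => by
    rw [nu_inv_apply, mul_inv_cancel, map_one]
  have hreg : ∀ x y : G, ∃! f : Equiv.Perm G, f ∈ N ∧ f x = y := by
    intro x y
    have hcmem : nuPerm γ y * (nuPerm γ x)⁻¹ ∈ N :=
      N.mul_mem ⟨y, rfl⟩ (N.inv_mem ⟨x, rfl⟩)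
    set c : Equiv.Perm G := nuPerm γ y * (nuPerm γ x)⁻¹ with hc
    have hcx : c x = y := by
      rw [hc, Equiv.Perm.mul_apply, hx1 x, nu_one_apply]
    refine ⟨c, ⟨hcmem, hcx⟩, ?_⟩
    rintro f ⟨hfN, hfx⟩
    -- any element of N fixing a point is the identity
    have fix_one : ∀ m : Equiv.Perm G, m ∈ N → m x = x → m = 1 := by
      intro m hm hmx
      set m' : Equiv.Perm G := (nuPerm γ x)⁻¹ * m * nuPerm γ x with hm'
      have hm'N : m' ∈ N := N.mul_mem (N.mul_mem (N.inv_mem ⟨x, rfl⟩) hm) ⟨x, rfl⟩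
      have hm'1 : m' 1 = 1 := by
        rw [hm', Equiv.Perm.mul_apply, Equiv.Perm.mul_apply, nu_one_apply, hmx, hx1 x]
      obtain ⟨e, he⟩ := hm'N
      have he1 : e = 1 := by rw [← nu_one_apply γ e, he]; exact hm'1
      have hm'one : m' = 1 := by rw [← he, he1, nu_one γ h1]
      have hmm : m = nuPerm γ x * m' * (nuPerm γ x)⁻¹ := by rw [hm']; group
      rw [hmm, hm'one]
      group
    have hmem : c⁻¹ * f ∈ N := N.mul_mem (N.inv_mem hcmem) hfN
    have hfix : (c⁻¹ * f) x = x := by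
      rw [Equiv.Perm.mul_apply, hfx, ← hcx, Equiv.Perm.inv_def, Equiv.symm_apply_apply]
    have h0 := fix_one _ hmem hfix
    exact (inv_mul_eq_one.mp h0).symm
  exact ⟨N, memN, hle, hnormal, hreg, nu_injective γ, fun x y z => by
    rw [nu_circ γ h1 h2 x y, Equiv.Perm.mul_apply]⟩
end

section
/- Let G be a finite group and let N be a normal regular subgroup of Hol(G) which is isomorphic to G as an abstract group. For each y ∈ G let n_y denote the unique element of N with n_y(1) = y, and define x ∘ y = n_y(x). Then for any θ ∈ NHol(G) with θ(1) = 1, the following are equivalent: (a) θ(x·y) = θ(x) ∘ θ(y) for all x, y ∈ G (i.e., θ is an isomorphism from G to (G, ∘)); (b) the conjugate of ρ(G) by θ equals N, that is, {the permutation z ↦ θ(θ⁻¹(z)·y) : y ∈ G} = N. -/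
/-- The multiple holomorph `NHol(G) = N_{S(G)}(Hol(G))`. -/
def NHol (G : Type*) [Group G] : Subgroup (Equiv.Perm G) := Subgroup.normalizer (Hol G : Set (Equiv.Perm G))

instance holNormalInNHol (G : Type*) [Group G] : ((Hol G).subgroupOf (NHol G)).Normal :=
  Subgroup.normal_in_normalizer (H := Hol G)

/-- The quotient `T(G) = NHol(G)/Hol(G)`. -/
abbrev THol (G : Type*) [Group G] : Type _ := NHol G ⧸ (Hol G).subgroupOf (NHol G)

theorem Equiv.Perm.inv_apply_self {α : Type*} (f : Equiv.Perm α) (x : α) : f⁻¹ (f x) = x :=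
  f.symm_apply_apply x

theorem Equiv.Perm.apply_inv_self {α : Type*} (f : Equiv.Perm α) (x : α) : f (f⁻¹ x) = x :=
  f.apply_symm_apply x

/-- let `N` be a normal regular subgroup of `Hol(G)` isomorphic to `G`,
let `n_y` be the unique element of `N` with `n_y(1) = y`, and let `x ∘ y = n_y(x)`.
For `θ ∈ NHol(G)` with `θ(1) = 1`, `θ` is an isomorphism `G → (G, ∘)` if and only if
`θ` conjugates `ρ(G)` to `N` (in the left-to-right composition convention, the conjugate
`θ⁻¹ρ(y)θ` is the permutation `z ↦ θ(θ⁻¹(z)·y)`). -/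
theorem stmt_5 {G : Type*} [Group G] [Fintype G]
    (N : Subgroup (Equiv.Perm G)) (hle : N ≤ Hol G)
    (hnormal : (N.subgroupOf (Hol G)).Normal)
    (hreg : ∀ x y : G, ∃! f : Equiv.Perm G, f ∈ N ∧ f x = y)
    (hiso : Nonempty (G ≃* ↥N))
    (nn : G → Equiv.Perm G) (hmem : ∀ y : G, nn y ∈ N) (hone : ∀ y : G, nn y 1 = y)
    (θ : Equiv.Perm G) (hθ : θ ∈ NHol G) (hθ1 : θ 1 = 1) :
    (∀ x y : G, θ (x * y) = nn (θ y) (θ x)) ↔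
      (∀ f : Equiv.Perm G, f ∈ N ↔ ∃ y : G, ∀ z : G, f z = θ (θ⁻¹ z * y)) := by
  have hinv1 : θ⁻¹ (1 : G) = 1 := by
    nth_rewrite 1 [← hθ1]; exact Equiv.Perm.inv_apply_self θ 1
  constructor
  · intro h f
    constructor
    · intro hf
      refine ⟨θ⁻¹ (f 1), fun z => ?_⟩
      have key := h (θ⁻¹ z) (θ⁻¹ (f 1))
      rw [key, Equiv.Perm.apply_inv_self θ, Equiv.Perm.apply_inv_self θ]
      have h1 : f = nn (f 1) :=
        (hreg 1 (f 1)).unique ⟨hf, rfl⟩ ⟨hmem _, hone _⟩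
      conv_lhs => rw [h1]
    · rintro ⟨y, hy⟩
      have hfn : f = nn (θ y) := by
        ext z
        rw [hy z]
        have := h (θ⁻¹ z) y
        rwa [Equiv.Perm.apply_inv_self θ] at this
      rw [hfn]; exact hmem _
  · intro h x y
    set f : Equiv.Perm G := (θ.symm.trans (Equiv.mulRight y)).trans θ with hf
    have hfz : ∀ z, f z = θ (θ⁻¹ z * y) := fun z => rfl
    have hfN : f ∈ N := (h f).mpr ⟨y, hfz⟩
    have hf1 : f 1 = θ y := by rw [hfz, hinv1, one_mul]
    have hfn : f = nn (θ y) :=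
      (hreg 1 (θ y)).unique ⟨hfN, hf1⟩ ⟨hmem _, hone _⟩
    have := hfz (θ x)
    rw [hfn] at this
    rw [this, Equiv.Perm.inv_apply_self θ]
end

section
/- Let p be an odd prime and let G be a finite p-group of nilpotency class two. Let N be a normal regular subgroup of Hol(G); for each x ∈ G let n_x denote the unique element of N with n_x(1) = x, and define γ(x): G → G by γ(x)(z) = n_x(z)·x⁻¹ (so each γ(x) ∈ Aut(G)). Assume that for every x ∈ G the automorphism γ(x) induces the identity on G/Z(G) and on Z(G), i.e., γ(x)(g)·g⁻¹ ∈ Z(G) for all g ∈ G and γ(x)(z) = z for all z ∈ Z(G). Define Δ(x, y) = x⁻¹·γ(y)(x). Then: Δ takes values in Z(G); Δ(xz, y) = Δ(x, y) for all z ∈ Z(G) and Δ(x, yw) = Δ(x, y) for all w ∈ G'; Δ(x₁x₂, y) = Δ(x₁, y)Δ(x₂, y) and Δ(x, y₁y₂) = Δ(x, y₁)Δ(x, y₂) for all x, x₁, x₂, y, y₁, y₂ ∈ G; Δ(β(x), β(y)) = β(Δ(x, y)) for all x, y ∈ G and all automorphisms β of G; and n_y(x) = x·y·Δ(x, y) for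 all x, y ∈ G. -/
/-- The bilinear form `Δ(x, y) = x⁻¹ · γ(y)(x) = x⁻¹ · (n_y(x)·y⁻¹)` associated to a
normal regular subgroup of the holomorph. -/
def DeltaOf {G : Type*} [Group G] (nn : G → Equiv.Perm G) (x y : G) : G :=
  x⁻¹ * (nn y x * y⁻¹)

open scoped commutatorElement

/-- let `G` be a finite `p`-group of class two (`p` odd) and `N` a normal
regular subgroup of `Hol(G)`, with `n_x ∈ N` the unique element with `n_x(1) = x` and
`γ(x)(z) = n_x(z)·x⁻¹`.  If every `γ(x)` induces the identity on `G/Z(G)` and on `Z(G)`,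
then `Δ(x, y) = x⁻¹·γ(y)(x)` takes values in `Z(G)`, only depends on `x mod Z(G)` and on
`y mod G'`, is multiplicative in each variable, is `Aut(G)`-equivariant, and satisfies
`n_y(x) = x·y·Δ(x, y)`. -/
theorem stmt_6 {p : ℕ} (hp : p.Prime) (hodd : Odd p)
    {G : Type*} [Group G] [Fintype G] (hpG : IsPGroup p G)
    (hc2 : (⊤ : Subgroup G).lowerCentralSeries 2 = ⊥) (hc1 : (⊤ : Subgroup G).lowerCentralSeries 1 ≠ ⊥)
    (N : Subgroup (Equiv.Perm G)) (hle : N ≤ Hol G)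
    (hnormal : (N.subgroupOf (Hol G)).Normal)
    (hreg : ∀ x y : G, ∃! f : Equiv.Perm G, f ∈ N ∧ f x = y)
    (nn : G → Equiv.Perm G) (hmem : ∀ x : G, nn x ∈ N) (hone : ∀ x : G, nn x 1 = x)
    (hcentral : ∀ x g : G, (nn x g * x⁻¹) * g⁻¹ ∈ Subgroup.center G)
    (hfixZ : ∀ x z : G, z ∈ Subgroup.center G → nn x z * x⁻¹ = z) :
    (∀ x y : G, DeltaOf nn x y ∈ Subgroup.center G) ∧
    (∀ x y z : G, z ∈ Subgroup.center G → DeltaOf nn (x * z) y = DeltaOf nn x y) ∧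
    (∀ x y w : G, w ∈ commutator G → DeltaOf nn x (y * w) = DeltaOf nn x y) ∧
    (∀ x₁ x₂ y : G, DeltaOf nn (x₁ * x₂) y = DeltaOf nn x₁ y * DeltaOf nn x₂ y) ∧
    (∀ x y₁ y₂ : G, DeltaOf nn x (y₁ * y₂) = DeltaOf nn x y₁ * DeltaOf nn x y₂) ∧
    (∀ (β : G ≃* G) (x y : G), DeltaOf nn (β x) (β y) = β (DeltaOf nn x y)) ∧
    (∀ x y : G, nn y x = x * y * DeltaOf nn x y) := by
  classical
  have centc : ∀ c ∈ Subgroup.center G, ∀ g : G, g * c = c * g :=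
    fun c hc g => Subgroup.mem_center_iff.mp hc g
  have swap : ∀ c ∈ Subgroup.center G, ∀ a b : G, a * c * b = a * b * c := by
    intro c hc a b
    rw [mul_assoc, ← centc c hc b, ← mul_assoc]
  -- commutator subgroup is central (class ≤ 2)
  have comm_le : ∀ w ∈ commutator G, w ∈ Subgroup.center G := by
    intro w hw
    rw [Subgroup.mem_center_iff]
    intro g
    have h2 : ⁅w, g⁆ ∈ (⊤ : Subgroup G).lowerCentralSeries 2 := by
      rw [Subgroup.lowerCentralSeries_succ]
      exact Subgroup.commutator_mem_commutator (by rwa [Subgroup.top_lowerCentralSeries_one])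
        (Subgroup.mem_top g)
    rw [hc2, Subgroup.mem_bot, commutatorElement_eq_one_iff_mul_comm] at h2
    exact h2.symm
  -- elements of the holomorph are "affine"
  have holmul : ∀ f : Equiv.Perm G, f ∈ Hol G → ∀ a b : G,
      f (a * b) = f a * ((f 1)⁻¹ * f b) := by
    intro f hf a b
    rw [Hol, Subgroup.mem_normalizer_iff] at hf
    obtain ⟨c, hc⟩ := (hf (Equiv.mulRight b)).mp ⟨b, fun x => rfl⟩
    have h1 := hc (f a)
    have h2 := hc (f 1)
    simp only [Equiv.Perm.mul_apply, Equiv.Perm.coe_inv, Equiv.symm_apply_apply, Equiv.coe_mulRight] at h1 h2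
    rw [one_mul] at h2
    rw [h1, h2]
    group
  have nmul : ∀ y a b : G, nn y (a * b) = nn y a * (y⁻¹ * nn y b) := by
    intro y a b
    rw [holmul (nn y) (hle (hmem y)) a b, hone]
  -- Delta as a central element
  have dcent0 : ∀ x y : G, DeltaOf nn x y = nn y x * y⁻¹ * x⁻¹ := by
    intro x y
    have h := centc _ (hcentral y x) x
    show x⁻¹ * (nn y x * y⁻¹) = nn y x * y⁻¹ * x⁻¹
    refine mul_left_cancel (a := x) ?_
    rw [h]
    group
  have dcent : ∀ x y : G, DeltaOf nn x y ∈ Subgroup.center G := by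
    intro x y
    rw [dcent0]
    exact hcentral y x
  -- statement 7
  have n7 : ∀ x y : G, nn y x = x * y * DeltaOf nn x y := by
    intro x y
    have h1 := centc _ (dcent x y) y
    rw [mul_assoc x y, h1]
    show nn y x = x * (x⁻¹ * (nn y x * y⁻¹) * y)
    group
  -- Delta vanishes when the first argument is central
  have dzleft : ∀ z ∈ Subgroup.center G, ∀ y : G, DeltaOf nn z y = 1 := by
    intro z hz y
    rw [DeltaOf, hfixZ y z hz]
    group
  -- statement 2
  have dz1 : ∀ x z : G, z ∈ Subgroup.center G → ∀ y : G,
      DeltaOf nn (x * z) y = DeltaOf nn x y := by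
    intro x z hz y
    have hnz : nn y z = z * y := mul_inv_eq_iff_eq_mul.mp (hfixZ y z hz)
    have key : DeltaOf nn (x * z) y = z⁻¹ * DeltaOf nn x y * z := by
      show (x * z)⁻¹ * (nn y (x * z) * y⁻¹) = z⁻¹ * (x⁻¹ * (nn y x * y⁻¹)) * z
      rw [nmul y x z, hnz]
      group
    rw [key, centc _ (dcent x y) z⁻¹, inv_mul_cancel_right]
  -- statement 4
  have dmulx : ∀ x₁ x₂ y : G,
      DeltaOf nn (x₁ * x₂) y = DeltaOf nn x₁ y * DeltaOf nn x₂ y := by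
    intro x₁ x₂ y
    show (x₁ * x₂)⁻¹ * (nn y (x₁ * x₂) * y⁻¹) = DeltaOf nn x₁ y * DeltaOf nn x₂ y
    rw [nmul y x₁ x₂]
    have key : (x₁ * x₂)⁻¹ * (nn y x₁ * (y⁻¹ * nn y x₂) * y⁻¹)
        = x₂⁻¹ * (x₁⁻¹ * (nn y x₁ * y⁻¹)) * x₂ * (x₂⁻¹ * (nn y x₂ * y⁻¹)) := by
      group
    rw [key]
    have hc := centc _ (dcent x₁ y) x₂⁻¹
    calc x₂⁻¹ * (x₁⁻¹ * (nn y x₁ * y⁻¹)) * x₂ * (x₂⁻¹ * (nn y x₂ * y⁻¹))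
        = x₁⁻¹ * (nn y x₁ * y⁻¹) * x₂⁻¹ * x₂ * (x₂⁻¹ * (nn y x₂ * y⁻¹)) := by
          rw [show x₂⁻¹ * (x₁⁻¹ * (nn y x₁ * y⁻¹)) = x₁⁻¹ * (nn y x₁ * y⁻¹) * x₂⁻¹ from hc]
      _ = DeltaOf nn x₁ y * DeltaOf nn x₂ y := by rw [DeltaOf, DeltaOf]; group
  -- identification of elements of N by their value at 1
  have nEq : ∀ f : Equiv.Perm G, f ∈ N → ∀ w : G, f 1 = w → f = nn w := by
    intro f hf w hw
    obtain ⟨u, _, huniq⟩ := hreg 1 w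
    exact (huniq f ⟨hf, hw⟩).trans (huniq (nn w) ⟨hmem w, hone w⟩).symm
  -- composition law in N
  have star : ∀ y₁ y₂ : G, nn y₂ * nn y₁ = nn (y₁ * y₂ * DeltaOf nn y₁ y₂) := by
    intro y₁ y₂
    apply nEq _ (mul_mem (hmem y₂) (hmem y₁))
    rw [Equiv.Perm.mul_apply, hone, ← n7 y₁ y₂]
  have star2 : ∀ x y₁ y₂ : G,
      DeltaOf nn x (y₁ * y₂ * DeltaOf nn y₁ y₂) = DeltaOf nn x y₁ * DeltaOf nn x y₂ := by
    intro x y₁ y₂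
    have h : nn y₂ (nn y₁ x) = nn (y₁ * y₂ * DeltaOf nn y₁ y₂) x := by
      rw [← Equiv.Perm.mul_apply, star y₁ y₂]
    rw [n7 x y₁, n7 (x * y₁ * DeltaOf nn x y₁) y₂,
      n7 x (y₁ * y₂ * DeltaOf nn y₁ y₂)] at h
    rw [dz1 (x * y₁) _ (dcent x y₁) y₂, dmulx x y₁ y₂] at h
    set A := DeltaOf nn x y₁ with hA
    set B := DeltaOf nn x y₂ with hB
    set C := DeltaOf nn y₁ y₂ with hC
    set E := DeltaOf nn x (y₁ * y₂ * C) with hE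
    -- h : x * y₁ * A * y₂ * (B * C) = x * (y₁ * y₂ * C) * E
    have hs : x * y₁ * A * y₂ * (B * C) = (x * y₁ * y₂) * (A * (B * C)) := by
      rw [swap A (dcent x y₁) (x * y₁) y₂]; group
    have h' : (x * y₁ * y₂) * (A * (B * C)) = (x * y₁ * y₂) * (C * E) := by
      rw [← hs, h]; group
    have h3 := mul_left_cancel h'
    have h4 : E * C = A * B * C := by
      rw [centc C (dcent y₁ y₂) E, ← h3]; group
    exact mul_right_cancel h4
  -- multiplying by a central element on the left of the 2nd argument
  have centmul : ∀ c ∈ Subgroup.center G, ∀ x y : G,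
      DeltaOf nn x (c * y) = DeltaOf nn x c * DeltaOf nn x y := by
    intro c hc x y
    have h := star2 x c y
    rwa [dzleft c hc y, mul_one] at h
  -- conjugation stability of N
  have hconjN : ∀ h : Equiv.Perm G, h ∈ Hol G → ∀ f ∈ N, h * f * h⁻¹ ∈ N := by
    intro h hh f hf
    have hf' : (⟨f, hle hf⟩ : Hol G) ∈ N.subgroupOf (Hol G) :=
      Subgroup.mem_subgroupOf.mpr hf
    have := hnormal.conj_mem _ hf' ⟨h, hh⟩
    rw [Subgroup.mem_subgroupOf] at this
    exact this
  -- automorphisms lie in the holomorph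
  have autHol : ∀ β : G ≃* G, (β.toEquiv : Equiv.Perm G) ∈ Hol G := by
    intro β
    have hinv : (β.toEquiv : Equiv.Perm G)⁻¹ = β.symm.toEquiv := rfl
    rw [Hol, Subgroup.mem_normalizer_iff]
    intro n
    constructor
    · rintro ⟨a, ha⟩
      refine ⟨β a, fun x => ?_⟩
      simp only [Equiv.Perm.mul_apply, hinv, ha]
      show β (β.symm x * a) = x * β a
      rw [map_mul]
      simp
    · rintro ⟨a, ha⟩
      refine ⟨β.symm a, fun x => ?_⟩
      have h := ha (β x)
      simp only [Equiv.Perm.mul_apply, hinv, MulEquiv.coe_toEquiv,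
        MulEquiv.symm_apply_apply] at h
      have h3 : n x = β.symm (β x * a) := by rw [← h]; simp
      simpa [map_mul] using h3
  -- statement: Aut-equivariance
  have equiv6 : ∀ (β : G ≃* G) (x y : G),
      DeltaOf nn (β x) (β y) = β (DeltaOf nn x y) := by
    intro β x y
    have hinv : (β.toEquiv : Equiv.Perm G)⁻¹ = β.symm.toEquiv := rfl
    have hcN := hconjN _ (autHol β) _ (hmem y)
    have he : (β.toEquiv : Equiv.Perm G) * nn y * (β.toEquiv : Equiv.Perm G)⁻¹
        = nn (β y) := by
      apply nEq _ hcN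
      rw [Equiv.Perm.mul_apply, Equiv.Perm.mul_apply, hinv]
      show β (nn y (β.symm 1)) = β y
      rw [map_one, hone]
    have hx : ((β.toEquiv : Equiv.Perm G) * nn y * (β.toEquiv : Equiv.Perm G)⁻¹) (β x)
        = nn (β y) (β x) := by rw [he]
    rw [Equiv.Perm.mul_apply, Equiv.Perm.mul_apply, hinv] at hx
    have hx' : β (nn y x) = nn (β y) (β x) := by
      rw [← hx]
      show β (nn y x) = β (nn y (β.symm (β x)))
      rw [MulEquiv.symm_apply_apply]
    rw [n7 x y, n7 (β x) (β y), map_mul, map_mul] at hx'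
    exact (mul_left_cancel hx').symm
  -- invariance of the second argument under conjugation
  have dinner : ∀ x y g : G, DeltaOf nn x (g * y * g⁻¹) = DeltaOf nn x y := by
    intro x y g
    have he := equiv6 (MulAut.conj g) x y
    simp only [MulAut.conj_apply] at he
    have hfix : g * DeltaOf nn x y * g⁻¹ = DeltaOf nn x y := by
      rw [centc _ (dcent x y) g, mul_inv_cancel_right]
    rw [hfix] at he
    have hzc : x⁻¹ * g * x * g⁻¹ ∈ Subgroup.center G := by
      apply comm_le
      have h : x⁻¹ * g * x * g⁻¹ = ⁅x⁻¹, g⁆ := by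
        rw [commutatorElement_def]; group
      rw [h]
      exact Subgroup.commutator_mem_commutator (Subgroup.mem_top _) (Subgroup.mem_top _)
    have hz : g * x * g⁻¹ = x * (x⁻¹ * g * x * g⁻¹) := by group
    rw [hz, dz1 x _ hzc] at he
    exact he
  -- Delta kills commutators in the second argument
  have killComm : ∀ x y g : G, DeltaOf nn x ⁅g, y⁆ = 1 := by
    intro x y g
    have hcz : ⁅g, y⁆ ∈ Subgroup.center G :=
      comm_le _ (Subgroup.commutator_mem_commutator (Subgroup.mem_top g) (Subgroup.mem_top y))
    have h1 : DeltaOf nn x (⁅g, y⁆ * y) = DeltaOf nn x y := by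
      have h := dinner x y g
      rw [show g * y * g⁻¹ = ⁅g, y⁆ * y by rw [commutatorElement_def]; group] at h
      exact h
    rw [centmul _ hcz x y] at h1
    exact mul_right_cancel (h1.trans (one_mul (DeltaOf nn x y)).symm)
  -- conjugating N by right translations
  have drho : ∀ x y g : G,
      DeltaOf nn x (g⁻¹ * y * DeltaOf nn g⁻¹ y * g) = DeltaOf nn x y := by
    intro x y g
    set r : Equiv.Perm G := Equiv.mulRight g with hr
    have hrmem : r ∈ Hol G := Subgroup.le_normalizer ⟨g, fun x => rfl⟩
    have hrinv : ∀ u : G, r⁻¹ u = u * g⁻¹ := by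
      intro u
      show (Equiv.mulRight g).symm u = u * g⁻¹
      simp
    have hcN := hconjN r hrmem _ (hmem y)
    have he : r * nn y * r⁻¹ = nn (g⁻¹ * y * DeltaOf nn g⁻¹ y * g) := by
      apply nEq _ hcN
      rw [Equiv.Perm.mul_apply, Equiv.Perm.mul_apply, hrinv, one_mul]
      show nn y g⁻¹ * g = g⁻¹ * y * DeltaOf nn g⁻¹ y * g
      rw [n7 g⁻¹ y]
    set w := g⁻¹ * y * DeltaOf nn g⁻¹ y * g with hw
    have hx : (r * nn y * r⁻¹) x = nn w x := by rw [he]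
    rw [Equiv.Perm.mul_apply, Equiv.Perm.mul_apply, hrinv] at hx
    have hx' : nn y (x * g⁻¹) * g = nn w x := hx
    rw [n7 (x * g⁻¹) y, n7 x w, dmulx x g⁻¹ y] at hx'
    set A := DeltaOf nn x y with hA
    set d := DeltaOf nn g⁻¹ y with hd
    set E := DeltaOf nn x w with hE
    -- hx' : x * g⁻¹ * y * (A * d) * g = x * w * E
    have hs : x * g⁻¹ * y * (A * d) * g = x * w * A := by
      rw [show x * g⁻¹ * y * (A * d) * g = x * g⁻¹ * y * A * d * g by group,
        swap A (dcent x y) (x * g⁻¹ * y) d,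
        swap A (dcent x y) (x * g⁻¹ * y * d) g, hw]
      group
    rw [hs] at hx'
    exact (mul_left_cancel hx').symm
  -- Delta kills Delta-values in the second argument
  have killD : ∀ x a y : G, DeltaOf nn x (DeltaOf nn a y) = 1 := by
    intro x a y
    have h := drho x y a⁻¹
    rw [inv_inv] at h
    set d := DeltaOf nn a y with hd
    have hdz : d ∈ Subgroup.center G := dcent a y
    have hwd : a * y * d * a⁻¹ = a * (y * d) * a⁻¹ := by group
    rw [hwd, dinner x (y * d) a, centc d hdz y, centmul d hdz x y] at h
    exact mul_right_cancel (h.trans (one_mul (DeltaOf nn x y)).symm)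
  -- statement 5
  have dmuly : ∀ x y₁ y₂ : G,
      DeltaOf nn x (y₁ * y₂) = DeltaOf nn x y₁ * DeltaOf nn x y₂ := by
    intro x y₁ y₂
    have h := star2 x y₁ y₂
    rw [show y₁ * y₂ * DeltaOf nn y₁ y₂ = DeltaOf nn y₁ y₂ * (y₁ * y₂) from
      centc _ (dcent y₁ y₂) (y₁ * y₂),
      centmul _ (dcent y₁ y₂) x (y₁ * y₂), killD x y₁ y₂, one_mul] at h
    exact h
  -- Delta kills the derived subgroup in the second argument
  have dG' : ∀ x w : G, w ∈ commutator G → DeltaOf nn x w = 1 := by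
    intro x w hw
    let φ : G →* G := MonoidHom.mk' (fun a => DeltaOf nn x a) (dmuly x)
    have hker : commutator G ≤ φ.ker := by
      rw [commutator_def]
      exact Subgroup.commutator_le.mpr fun g _ y _ =>
        MonoidHom.mem_ker.mpr (killComm x y g)
    exact MonoidHom.mem_ker.mp (hker hw)
  refine ⟨dcent, fun x y z hz => dz1 x z hz y, ?_, dmulx, dmuly, equiv6, n7⟩
  intro x y w hw
  rw [dmuly x y w, dG' x w hw, mul_one]
end

section
/- Let p be an odd prime and let G be a finite p-group of nilpotency class two. Let Δ: G × G → Z(G) be a map such that: Δ(xz, y) = Δ(x, y) for all z ∈ Z(G); Δ(x, yw) = Δ(x, y) for all w ∈ G'; Δ(x₁x₂, y) = Δ(x₁, y)Δ(x₂, y) and Δ(x, y₁y₂) = Δ(x, y₁)Δ(x, y₂) for all x, x₁, x₂, y, y₁, y₂ ∈ G; and Δ(β(x), β(y)) = β(Δ(x, y)) for all x, y ∈ G and all automorphisms β of G. For each x ∈ G define the permutation ν(x) ∈ S(G) by ν(x)(z) = z·x·Δ(z, x). Then for each y ∈ G the map z ↦ z·Δ(z, y) is an automorphism of G that induces the identity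 on G/Z(G) and on Z(G), and N = {ν(x) : x ∈ G} is a normal regular subgroup of Hol(G). -/
section Aux

variable {G : Type*} [Group G]

lemma cswap {c : G} (hc : c ∈ Subgroup.center G) (x : G) : x * c = c * x :=
  Subgroup.mem_center_iff.mp hc x

lemma cmid {c : G} (hc : c ∈ Subgroup.center G) (x y : G) : x * c * y = x * y * c := by
  rw [mul_assoc, ← cswap hc y, ← mul_assoc]

variable (Δ : G → G → G)

lemma D_one_left (hmul₁ : ∀ x₁ x₂ y : G, Δ (x₁ * x₂) y = Δ x₁ y * Δ x₂ y) (y : G) :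
    Δ 1 y = 1 := by
  have h := hmul₁ 1 1 y
  rw [one_mul] at h
  exact mul_eq_left.mp h.symm

lemma D_one_right (hmul₂ : ∀ x y₁ y₂ : G, Δ x (y₁ * y₂) = Δ x y₁ * Δ x y₂) (x : G) :
    Δ x 1 = 1 := by
  have h := hmul₂ x 1 1
  rw [one_mul] at h
  exact mul_eq_left.mp h.symm

lemma D_center_left (hleft : ∀ x y z : G, z ∈ Subgroup.center G → Δ (x * z) y = Δ x y)
    (hmul₁ : ∀ x₁ x₂ y : G, Δ (x₁ * x₂) y = Δ x₁ y * Δ x₂ y)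
    {z : G} (hz : z ∈ Subgroup.center G) (y : G) : Δ z y = 1 := by
  have h := hleft 1 y z hz
  rw [one_mul] at h
  rw [h, D_one_left Δ hmul₁]

lemma D_comm_right (hright : ∀ x y w : G, w ∈ commutator G → Δ x (y * w) = Δ x y)
    (hmul₂ : ∀ x y₁ y₂ : G, Δ x (y₁ * y₂) = Δ x y₁ * Δ x y₂)
    {w : G} (hw : w ∈ commutator G) (x : G) : Δ x w = 1 := by
  have h := hright x 1 w hw
  rw [one_mul] at h
  rw [h, D_one_right Δ hmul₂]

lemma D_inv_left (hmul₁ : ∀ x₁ x₂ y : G, Δ (x₁ * x₂) y = Δ x₁ y * Δ x₂ y) (x y : G) :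
    Δ x⁻¹ y = (Δ x y)⁻¹ := by
  have h := hmul₁ x x⁻¹ y
  rw [mul_inv_cancel, D_one_left Δ hmul₁] at h
  exact (eq_inv_of_mul_eq_one_right h.symm)

lemma D_inv_right (hmul₂ : ∀ x y₁ y₂ : G, Δ x (y₁ * y₂) = Δ x y₁ * Δ x y₂) (x y : G) :
    Δ x y⁻¹ = (Δ x y)⁻¹ := by
  have h := hmul₂ x y y⁻¹
  rw [mul_inv_cancel, D_one_right Δ hmul₂] at h
  exact (eq_inv_of_mul_eq_one_right h.symm)

/-- The homomorphism `z ↦ z * Δ z y`. -/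
def eHom (hval : ∀ x y : G, Δ x y ∈ Subgroup.center G)
    (hmul₁ : ∀ x₁ x₂ y : G, Δ (x₁ * x₂) y = Δ x₁ y * Δ x₂ y) (y : G) : G →* G where
  toFun z := z * Δ z y
  map_one' := by show (1:G) * Δ 1 y = 1; rw [D_one_left Δ hmul₁, mul_one]
  map_mul' a b := by
    show a * b * Δ (a * b) y = a * Δ a y * (b * Δ b y)
    rw [hmul₁, ← mul_assoc, ← cmid (hval a y) a b, mul_assoc]

lemma eHom_bij [Finite G] (hval : ∀ x y : G, Δ x y ∈ Subgroup.center G)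
    (hleft : ∀ x y z : G, z ∈ Subgroup.center G → Δ (x * z) y = Δ x y)
    (hmul₁ : ∀ x₁ x₂ y : G, Δ (x₁ * x₂) y = Δ x₁ y * Δ x₂ y) (y : G) :
    Function.Bijective (eHom Δ hval hmul₁ y) := by
  rw [← Finite.injective_iff_bijective, injective_iff_map_eq_one]
  intro a ha
  have ha' : a * Δ a y = 1 := ha
  have hac : a ∈ Subgroup.center G := by
    have h : a = (Δ a y)⁻¹ := eq_inv_of_mul_eq_one_left ha'
    rw [h]; exact Subgroup.inv_mem _ (hval a y)
  have h1 := D_center_left Δ hleft hmul₁ hac y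
  rw [h1, mul_one] at ha'
  exact ha'

/-- The automorphism `z ↦ z * Δ z y`. -/
noncomputable def eEquiv [Finite G] (hval : ∀ x y : G, Δ x y ∈ Subgroup.center G)
    (hleft : ∀ x y z : G, z ∈ Subgroup.center G → Δ (x * z) y = Δ x y)
    (hmul₁ : ∀ x₁ x₂ y : G, Δ (x₁ * x₂) y = Δ x₁ y * Δ x₂ y) (y : G) : G ≃* G :=
  MulEquiv.ofBijective (eHom Δ hval hmul₁ y) (eHom_bij Δ hval hleft hmul₁ y)

lemma eEquiv_apply [Finite G] (hval : ∀ x y : G, Δ x y ∈ Subgroup.center G)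
    (hleft : ∀ x y z : G, z ∈ Subgroup.center G → Δ (x * z) y = Δ x y)
    (hmul₁ : ∀ x₁ x₂ y : G, Δ (x₁ * x₂) y = Δ x₁ y * Δ x₂ y) (y z : G) :
    eEquiv Δ hval hleft hmul₁ y z = z * Δ z y := rfl

variable [Finite G]

/-- Key lemma: `Δ` kills values of `Δ` in the second argument. -/
lemma DD 
    (hval : ∀ x y : G, Δ x y ∈ Subgroup.center G) (hleft : ∀ x y z : G, z ∈ Subgroup.center G → Δ (x * z) y = Δ x y)
    (hmul₁ : ∀ x₁ x₂ y : G, Δ (x₁ * x₂) y = Δ x₁ y * Δ x₂ y) (hmul₂ : ∀ x y₁ y₂ : G, Δ x (y₁ * y₂) = Δ x y₁ * Δ x y₂)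
    (hequiv : ∀ (β : G ≃* G) (x y : G), Δ (β x) (β y) = β (Δ x y))
    (a b y : G) : Δ a (Δ b y) = 1 := by
  have h := hequiv (eEquiv Δ hval hleft hmul₁ y) a b
  rw [eEquiv_apply, eEquiv_apply, eEquiv_apply] at h
  rw [hleft a _ _ (hval a y), hmul₂] at h
  rw [D_center_left Δ hleft hmul₁ (hval a b) y, mul_one] at h
  exact mul_left_cancel (h.trans (mul_one _).symm)

/-- The permutation `ν(a) : z ↦ z * a * Δ z a`. -/
noncomputable def nu (hval : ∀ x y : G, Δ x y ∈ Subgroup.center G) (hleft : ∀ x y z : G, z ∈ Subgroup.center G → Δ (x * z) y = Δ x y)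
    (hmul₁ : ∀ x₁ x₂ y : G, Δ (x₁ * x₂) y = Δ x₁ y * Δ x₂ y) (a : G) : Equiv.Perm G :=
  (eEquiv Δ hval hleft hmul₁ a).toEquiv.trans (Equiv.mulRight a)

lemma nu_apply_s7 (hval : ∀ x y : G, Δ x y ∈ Subgroup.center G) (hleft : ∀ x y z : G, z ∈ Subgroup.center G → Δ (x * z) y = Δ x y)
    (hmul₁ : ∀ x₁ x₂ y : G, Δ (x₁ * x₂) y = Δ x₁ y * Δ x₂ y) (a z : G) : nu Δ hval hleft hmul₁ a z = z * a * Δ z a := by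
  show (z * Δ z a) * a = z * a * Δ z a
  exact cmid (hval z a) z a

lemma mul_formula 
    (hval : ∀ x y : G, Δ x y ∈ Subgroup.center G) (hleft : ∀ x y z : G, z ∈ Subgroup.center G → Δ (x * z) y = Δ x y)
    (hmul₁ : ∀ x₁ x₂ y : G, Δ (x₁ * x₂) y = Δ x₁ y * Δ x₂ y) (hmul₂ : ∀ x y₁ y₂ : G, Δ x (y₁ * y₂) = Δ x y₁ * Δ x y₂)
    (hequiv : ∀ (β : G ≃* G) (x y : G), Δ (β x) (β y) = β (Δ x y))
    (f g : Equiv.Perm G) (a b : G)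
    (hf : ∀ z, f z = z * a * Δ z a) (hg : ∀ z, g z = z * b * Δ z b) (z : G) :
    (f * g) z = z * (b * a * Δ b a) * Δ z (b * a * Δ b a) := by
  rw [Equiv.Perm.mul_apply, hg, hf]
  rw [hmul₁ (z * b) (Δ z b) a, hmul₁ z b a,
    D_center_left Δ hleft hmul₁ (hval z b) a, mul_one]
  rw [hmul₂ z (b * a) (Δ b a), hmul₂ z b a,
    DD Δ hval hleft hmul₁ hmul₂ hequiv z b a, mul_one]
  calc z * b * Δ z b * a * (Δ z a * Δ b a)
      = z * b * Δ z b * a * Δ z a * Δ b a := by group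
    _ = z * b * a * Δ z b * Δ z a * Δ b a := by rw [cmid (hval z b) (z*b) a]
    _ = z * b * a * (Δ z b * Δ z a) * Δ b a := by group
    _ = z * b * a * Δ b a * (Δ z b * Δ z a) := by
        rw [← cmid (hval b a) (z*b*a) (Δ z b * Δ z a)]
    _ = z * (b * a * Δ b a) * (Δ z b * Δ z a) := by group

lemma inv_formula 
    (hval : ∀ x y : G, Δ x y ∈ Subgroup.center G) (hleft : ∀ x y z : G, z ∈ Subgroup.center G → Δ (x * z) y = Δ x y)
    (hmul₁ : ∀ x₁ x₂ y : G, Δ (x₁ * x₂) y = Δ x₁ y * Δ x₂ y) (hmul₂ : ∀ x y₁ y₂ : G, Δ x (y₁ * y₂) = Δ x y₁ * Δ x y₂)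
    (hequiv : ∀ (β : G ≃* G) (x y : G), Δ (β x) (β y) = β (Δ x y))
    (f : Equiv.Perm G) (a : G) (hf : ∀ z, f z = z * a * Δ z a) (z : G) :
    f⁻¹ z = z * (a⁻¹ * Δ a a) * Δ z (a⁻¹ * Δ a a) := by
  rw [Equiv.Perm.inv_def, Equiv.symm_apply_eq, hf]
  rw [hmul₂ z a⁻¹ (Δ a a), D_inv_right Δ hmul₂ z a,
    DD Δ hval hleft hmul₁ hmul₂ hequiv z a a, mul_one]
  rw [hmul₁ (z * (a⁻¹ * Δ a a)) ((Δ z a)⁻¹) a, hmul₁ z (a⁻¹ * Δ a a) a,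
    hmul₁ a⁻¹ (Δ a a) a, D_inv_left Δ hmul₁ a a,
    D_center_left Δ hleft hmul₁ (hval a a) a,
    D_center_left Δ hleft hmul₁ (Subgroup.inv_mem _ (hval z a)) a, mul_one, mul_one]
  calc (z : G)
      = z * a⁻¹ * Δ a a * a * (Δ z a)⁻¹ * Δ z a * (Δ a a)⁻¹ := by
        rw [cmid (hval a a) (z * a⁻¹) a]; group
    _ = z * a⁻¹ * Δ a a * (Δ z a)⁻¹ * a * (Δ z a * (Δ a a)⁻¹) := by
        rw [cmid (Subgroup.inv_mem _ (hval z a)) (z * a⁻¹ * Δ a a) a]; group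
    _ = z * (a⁻¹ * Δ a a) * (Δ z a)⁻¹ * a * (Δ z a * (Δ a a)⁻¹) := by group

lemma conj_rho_formula (hval : ∀ x y : G, Δ x y ∈ Subgroup.center G) (hmul₁ : ∀ x₁ x₂ y : G, Δ (x₁ * x₂) y = Δ x₁ y * Δ x₂ y)
    (f : Equiv.Perm G) (a : G) (hf : ∀ z, f z = z * a * Δ z a)
    (h' : Equiv.Perm G) (y : G) (hh : ∀ z, h' z = z * y) (z : G) :
    (f * h' * f⁻¹) z = z * (a⁻¹ * y * a * Δ y a) := by
  have hu : f⁻¹ z * a * Δ (f⁻¹ z) a = z := by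
    rw [← hf (f⁻¹ z)]; exact f.apply_symm_apply z
  rw [Equiv.Perm.mul_apply, Equiv.Perm.mul_apply, hh (f⁻¹ z), hf]
  set u := f⁻¹ z with hu_def
  rw [hmul₁ u y a, ← hu]
  calc u * y * a * (Δ u a * Δ y a)
      = u * a * a⁻¹ * y * a * Δ u a * Δ y a := by group
    _ = u * a * a⁻¹ * y * Δ u a * a * Δ y a := by
        rw [← cmid (hval u a) (u * a * a⁻¹ * y) a]
    _ = u * a * a⁻¹ * Δ u a * y * a * Δ y a := by
        rw [← cmid (hval u a) (u * a * a⁻¹) y]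
    _ = u * a * Δ u a * a⁻¹ * y * a * Δ y a := by
        rw [← cmid (hval u a) (u * a) a⁻¹]
    _ = u * a * Δ u a * (a⁻¹ * y * a * Δ y a) := by group

lemma conj_aut_formula (hequiv : ∀ (β : G ≃* G) (x y : G), Δ (β x) (β y) = β (Δ x y))
    (B : G ≃* G) (f : Equiv.Perm G) (a : G)
    (hf : ∀ z, f z = z * a * Δ z a) (z : G) :
    ((B.toEquiv : Equiv.Perm G) * f * (B.toEquiv : Equiv.Perm G)⁻¹) z
      = z * B a * Δ z (B a) := by
  rw [Equiv.Perm.mul_apply, Equiv.Perm.mul_apply, Equiv.Perm.inv_def]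
  have h1 : (B.toEquiv.symm z) = B.symm z := rfl
  rw [h1, hf]
  show B (B.symm z * a * Δ (B.symm z) a) = z * B a * Δ z (B a)
  rw [map_mul, map_mul, ← hequiv B (B.symm z) a, MulEquiv.apply_symm_apply]

open scoped commutatorElement in
lemma conj_mulRight_formula 
    (hval : ∀ x y : G, Δ x y ∈ Subgroup.center G) (hleft : ∀ x y z : G, z ∈ Subgroup.center G → Δ (x * z) y = Δ x y)
    (hright : ∀ x y w : G, w ∈ commutator G → Δ x (y * w) = Δ x y)
    (hmul₁ : ∀ x₁ x₂ y : G, Δ (x₁ * x₂) y = Δ x₁ y * Δ x₂ y) (hmul₂ : ∀ x y₁ y₂ : G, Δ x (y₁ * y₂) = Δ x y₁ * Δ x y₂)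
    (hequiv : ∀ (β : G ≃* G) (x y : G), Δ (β x) (β y) = β (Δ x y))
    (f : Equiv.Perm G) (a c : G)
    (hf : ∀ z, f z = z * a * Δ z a) (z : G) :
    ((Equiv.mulRight c : Equiv.Perm G) * f * (Equiv.mulRight c : Equiv.Perm G)⁻¹) z
      = z * (c⁻¹ * a * c * (Δ c a)⁻¹) * Δ z (c⁻¹ * a * c * (Δ c a)⁻¹) := by
  have hb2 : Δ z (c⁻¹ * a * c) = Δ z a := by
    have hw : c⁻¹ * a * c = a * ⁅a⁻¹, c⁻¹⁆ := by rw [commutatorElement_def]; group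
    rw [hw, hright z a _ (Subgroup.commutator_mem_commutator
      (Subgroup.mem_top _) (Subgroup.mem_top _))]
  have hinvz : ((Equiv.mulRight c : Equiv.Perm G))⁻¹ z = z * c⁻¹ := by simp
  rw [Equiv.Perm.mul_apply, Equiv.Perm.mul_apply, hinvz, hf (z * c⁻¹)]
  show (z * c⁻¹ * a * Δ (z * c⁻¹) a) * c = _
  rw [hmul₁ z c⁻¹ a, D_inv_left Δ hmul₁ c a]
  rw [hmul₂ z (c⁻¹ * a * c) ((Δ c a)⁻¹), hb2, D_inv_right Δ hmul₂ z (Δ c a),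
    DD Δ hval hleft hmul₁ hmul₂ hequiv z c a, inv_one, mul_one]
  have hinv : (Δ c a)⁻¹ ∈ Subgroup.center G := Subgroup.inv_mem _ (hval c a)
  calc z * c⁻¹ * a * (Δ z a * (Δ c a)⁻¹) * c
      = z * c⁻¹ * a * Δ z a * (Δ c a)⁻¹ * c := by group
    _ = z * c⁻¹ * a * Δ z a * c * (Δ c a)⁻¹ := by
        rw [cmid hinv (z * c⁻¹ * a * Δ z a) c]
    _ = z * c⁻¹ * a * c * Δ z a * (Δ c a)⁻¹ := by
        rw [cmid (hval z a) (z * c⁻¹ * a) c]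
    _ = z * c⁻¹ * a * c * (Δ c a)⁻¹ * Δ z a := by
        rw [← cmid hinv (z * c⁻¹ * a * c) (Δ z a)]
    _ = z * (c⁻¹ * a * c * (Δ c a)⁻¹) * Δ z a := by group

/-- Decomposition of holomorph elements. -/
lemma holDecomp (h : Equiv.Perm G) (hh : h ∈ Hol G) :
    ∃ (B : G ≃* G) (c : G), h = (Equiv.mulRight c : Equiv.Perm G) * (B.toEquiv : Equiv.Perm G) := by
  have hmulpt : ∀ x y : G, h (x * y) = h x * ((h 1)⁻¹ * h y) := by
    intro x y
    have hry : (Equiv.mulRight y : Equiv.Perm G) ∈ RhoSubgroup G := ⟨y, fun x => rfl⟩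
    obtain ⟨w, hw⟩ := (Subgroup.mem_normalizer_iff.mp hh (Equiv.mulRight y)).mp hry
    have key : ∀ x : G, h (x * y) = h x * w := by
      intro x
      have := hw (h x)
      rw [Equiv.Perm.mul_apply, Equiv.Perm.mul_apply, Equiv.Perm.inv_def, Equiv.symm_apply_apply] at this
      exact this
    have h1 : w = (h 1)⁻¹ * h y := by
      have := key 1
      rw [one_mul] at this
      rw [this]; group
    rw [key x, h1]
  refine ⟨{ toEquiv := h.trans (Equiv.mulRight (h 1)⁻¹),
            map_mul' := fun x y => ?_ }, h 1, ?_⟩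
  · show h (x * y) * (h 1)⁻¹ = (h x * (h 1)⁻¹) * (h y * (h 1)⁻¹)
    rw [hmulpt x y]; group
  · ext z
    show h z = (h z * (h 1)⁻¹) * h 1
    group

end Aux

/-- let `p` be an odd prime and `G` a finite `p`-group of class two.
Given a bilinear form `Δ : G/Z(G) × G/G' → Z(G)` which is `Aut(G)`-equivariant,
each map `z ↦ z·Δ(z, y)` is an automorphism of `G` inducing the identity on `G/Z(G)`
and on `Z(G)`, and the permutations `ν(x) : z ↦ z·x·Δ(z, x)` form a normal regular
subgroup of `Hol(G)`. -/
theorem stmt_7 {p : ℕ} (hp : p.Prime) (hodd : Odd p)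
    {G : Type*} [Group G] [Fintype G] (hpG : IsPGroup p G)
    (hc2 : (⊤ : Subgroup G).lowerCentralSeries 2 = ⊥) (hc1 : (⊤ : Subgroup G).lowerCentralSeries 1 ≠ ⊥)
    (Δ : G → G → G)
    (hval : ∀ x y : G, Δ x y ∈ Subgroup.center G)
    (hleft : ∀ x y z : G, z ∈ Subgroup.center G → Δ (x * z) y = Δ x y)
    (hright : ∀ x y w : G, w ∈ commutator G → Δ x (y * w) = Δ x y)
    (hmul₁ : ∀ x₁ x₂ y : G, Δ (x₁ * x₂) y = Δ x₁ y * Δ x₂ y)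
    (hmul₂ : ∀ x y₁ y₂ : G, Δ x (y₁ * y₂) = Δ x y₁ * Δ x y₂)
    (hequiv : ∀ (β : G ≃* G) (x y : G), Δ (β x) (β y) = β (Δ x y)) :
    (∀ y : G, ∃ e : G ≃* G, (∀ z : G, e z = z * Δ z y) ∧
      (∀ g : G, e g * g⁻¹ ∈ Subgroup.center G) ∧
      (∀ z : G, z ∈ Subgroup.center G → e z = z)) ∧
    ∃ N : Subgroup (Equiv.Perm G),
      (∀ f : Equiv.Perm G, f ∈ N ↔ ∃ x : G, ∀ z : G, f z = z * x * Δ z x) ∧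
      N ≤ Hol G ∧ (N.subgroupOf (Hol G)).Normal ∧
      (∀ x y : G, ∃! f : Equiv.Perm G, f ∈ N ∧ f x = y) := by
  constructor
  · -- the automorphisms e_y
    intro y
    refine ⟨eEquiv Δ hval hleft hmul₁ y, fun z => rfl, fun g => ?_, fun z hz => ?_⟩
    · have h : eEquiv Δ hval hleft hmul₁ y g * g⁻¹ = Δ g y := by
        rw [eEquiv_apply, cmid (hval g y) g g⁻¹]
        group
      rw [h]; exact hval g y
    · rw [eEquiv_apply, D_center_left Δ hleft hmul₁ hz y, mul_one]
  · -- the normal regular subgroup N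
    refine ⟨{ carrier := {f : Equiv.Perm G | ∃ x : G, ∀ z : G, f z = z * x * Δ z x}
              one_mem' := ⟨1, fun z => by
                rw [D_one_right Δ hmul₂, mul_one, mul_one]; rfl⟩
              mul_mem' := ?_
              inv_mem' := ?_ }, fun f => Iff.rfl, ?_, ?_, ?_⟩
    · rintro f g ⟨a, hfa⟩ ⟨b, hgb⟩
      exact ⟨b * a * Δ b a, mul_formula Δ hval hleft hmul₁ hmul₂ hequiv f g a b hfa hgb⟩
    · rintro f ⟨a, hfa⟩
      exact ⟨a⁻¹ * Δ a a, inv_formula Δ hval hleft hmul₁ hmul₂ hequiv f a hfa⟩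
    · -- N ≤ Hol G
      rintro f ⟨a, hfa⟩
      have hfinv := inv_formula Δ hval hleft hmul₁ hmul₂ hequiv f a hfa
      rw [Hol, Subgroup.mem_normalizer_iff]
      intro g
      constructor
      · rintro ⟨y, hy⟩
        exact ⟨a⁻¹ * y * a * Δ y a,
          conj_rho_formula Δ hval hmul₁ f a hfa g y hy⟩
      · rintro ⟨y, hy⟩
        have h2 : f⁻¹ * (f * g * f⁻¹) * (f⁻¹)⁻¹ = g := by group
        rw [← h2]
        set c := a⁻¹ * Δ a a with hc
        exact ⟨c⁻¹ * y * c * Δ y c,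
          conj_rho_formula Δ hval hmul₁ f⁻¹ c hfinv (f * g * f⁻¹) y hy⟩
    · -- normality in Hol G
      constructor
      rintro n hn g
      rw [Subgroup.mem_subgroupOf] at hn ⊢
      obtain ⟨a, hfa⟩ := hn
      obtain ⟨B, c, hBc⟩ := holDecomp ((g : Equiv.Perm G)) g.2
      have key : (g : Equiv.Perm G) * (n : Equiv.Perm G) * (g : Equiv.Perm G)⁻¹
          = (Equiv.mulRight c : Equiv.Perm G) *
            ((B.toEquiv : Equiv.Perm G) * (n : Equiv.Perm G) * (B.toEquiv : Equiv.Perm G)⁻¹) *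
            (Equiv.mulRight c : Equiv.Perm G)⁻¹ := by
        rw [hBc]; group
      have hmid := conj_aut_formula Δ hequiv B (n : Equiv.Perm G) a hfa
      have hfin := conj_mulRight_formula Δ hval hleft hright hmul₁ hmul₂ hequiv
        ((B.toEquiv : Equiv.Perm G) * (n : Equiv.Perm G) * (B.toEquiv : Equiv.Perm G)⁻¹)
        (B a) c hmid
      refine ⟨c⁻¹ * B a * c * (Δ c (B a))⁻¹, fun z => ?_⟩
      have hcoe : ((g * n * g⁻¹ : Hol G) : Equiv.Perm G)
          = (g : Equiv.Perm G) * (n : Equiv.Perm G) * (g : Equiv.Perm G)⁻¹ := by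
        push_cast; rfl
      rw [hcoe, key]
      exact hfin z
    · -- regularity
      intro x y
      have hpsi_bij : Function.Bijective (fun a : G => a * Δ x a) := by
        have hinj : Function.Injective (fun a : G => a * Δ x a) := by
          have : ∀ a : G, a * Δ x a = 1 → a = 1 := by
            intro a ha
            have h1 : a = (Δ x a)⁻¹ := eq_inv_of_mul_eq_one_left ha
            have h2 : Δ x a = 1 := by
              conv_lhs => rw [h1]
              rw [D_inv_right Δ hmul₂, DD Δ hval hleft hmul₁ hmul₂ hequiv x x a, inv_one]
            rw [h2, mul_one] at ha
            exact ha
          intro a b hab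
          simp only at hab
          have hkey : a * b⁻¹ * Δ x (a * b⁻¹) = 1 := by
            rw [hmul₂, D_inv_right Δ hmul₂]
            calc a * b⁻¹ * (Δ x a * (Δ x b)⁻¹)
                = a * b⁻¹ * Δ x a * (Δ x b)⁻¹ := by group
              _ = a * Δ x a * b⁻¹ * (Δ x b)⁻¹ := by rw [← cmid (hval x a) a b⁻¹]
              _ = b * Δ x b * b⁻¹ * (Δ x b)⁻¹ := by rw [hab]
              _ = b * b⁻¹ * Δ x b * (Δ x b)⁻¹ := by rw [cmid (hval x b) b b⁻¹]
              _ = 1 := by group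
          exact mul_inv_eq_one.mp (this _ hkey)
        exact Finite.injective_iff_bijective.mp hinj
      obtain ⟨a, ha⟩ := hpsi_bij.surjective (x⁻¹ * y)
      simp only at ha
      refine ⟨nu Δ hval hleft hmul₁ a, ⟨⟨a, nu_apply_s7 Δ hval hleft hmul₁ a⟩, ?_⟩, ?_⟩
      · rw [nu_apply_s7, mul_assoc, ha]; group
      · rintro f ⟨⟨a', hfa'⟩, hfx⟩
        have h1 : a' * Δ x a' = x⁻¹ * y := by
          have h2 : x * (a' * Δ x a') = y := by rw [← mul_assoc, ← hfa' x]; exact hfx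
          rw [← h2]; group
        have h3 : a' = a := hpsi_bij.injective (h1.trans ha.symm)
        ext z
        rw [hfa' z, nu_apply_s7, h3]
end

section
/- Let p be an odd prime and let G be a nonabelian finite p-group of nilpotency class two. Let c and d be integers such that d(2c+1) ≡ 1 (mod exp(G')), where exp(G') is the exponent of the derived subgroup G'. Then the map θ_d: G → G, θ_d(x) = x^d, is a bijection and satisfies (xy)^d = x^d · y^d · [x^d, y^d]^c for all x, y ∈ G; that is, θ_d is an isomorphism from G onto (G, ∘_{[c]}), where x ∘_{[c]} y = x·y·[x, y]^c. -/
open scoped commutatorElement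

section Class2
variable {G : Type*} [Group G]

lemma cl2_comm_mul_left (hcen : ∀ a b z : G, Commute ⁅a, b⁆ z) (a b c : G) :
    ⁅a * b, c⁆ = ⁅a, c⁆ * ⁅b, c⁆ := by
  have h1 : ⁅a * b, c⁆ = a * ⁅b, c⁆ * (c * a⁻¹ * c⁻¹) := by
    simp only [commutatorElement_def]; group
  have h2 : a * (c * a⁻¹ * c⁻¹) = ⁅a, c⁆ := by simp only [commutatorElement_def]; group
  rw [h1, mul_assoc a, ← (hcen b c _).eq, ← mul_assoc, ← (hcen b c _).eq, mul_assoc, h2,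
    (hcen b c _).eq]

lemma cl2_comm_inv_left (hcen : ∀ a b z : G, Commute ⁅a, b⁆ z) (a b : G) :
    ⁅a⁻¹, b⁆ = ⁅a, b⁆⁻¹ := by
  have h := cl2_comm_mul_left hcen a⁻¹ a b
  rw [inv_mul_cancel, commutatorElement_one_left] at h
  exact eq_inv_of_mul_eq_one_left h.symm

lemma cl2_comm_zpow_left (hcen : ∀ a b z : G, Commute ⁅a, b⁆ z) (a b : G) (n : ℤ) :
    ⁅a ^ n, b⁆ = ⁅a, b⁆ ^ n := by
  induction n using Int.induction_on with
  | zero => simp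
  | succ k ih => rw [zpow_add_one, cl2_comm_mul_left hcen, ih, zpow_add_one]
  | pred k ih =>
      rw [zpow_sub_one, cl2_comm_mul_left hcen, ih, cl2_comm_inv_left hcen, zpow_sub_one]

lemma cl2_comm_zpow_right (hcen : ∀ a b z : G, Commute ⁅a, b⁆ z) (a b : G) (n : ℤ) :
    ⁅a, b ^ n⁆ = ⁅a, b⁆ ^ n := by
  have h : ⁅a, b ^ n⁆ = (⁅b ^ n, a⁆)⁻¹ := (commutatorElement_inv _ _).symm
  rw [h, cl2_comm_zpow_left hcen, ← inv_zpow, commutatorElement_inv]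

lemma cl2_swap (hcen : ∀ a b z : G, Commute ⁅a, b⁆ z) (a b : G) :
    b * a = a * b * ⁅b, a⁆ := by
  rw [← (hcen b a (a * b)).eq]
  simp only [commutatorElement_def]; group

lemma cl2_key (hcen : ∀ a b z : G, Commute ⁅a, b⁆ z) (x y : G) (m : ℤ) :
    x ^ (m + 1) * y ^ (m + 1) * ⁅y, x⁆ ^ ((m + 1) * m / 2)
      = x ^ m * y ^ m * ⁅y, x⁆ ^ (m * (m - 1) / 2) * (x * y) := by
  have hmv : ∀ (k : ℤ) (z w : G), ⁅y, x⁆ ^ k * (z * w) = z * (⁅y, x⁆ ^ k * w) :=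
    fun k z w => ((hcen y x z).zpow_left k).left_comm w
  have hmv2 : ∀ (k : ℤ) (z : G), ⁅y, x⁆ ^ k * z = z * ⁅y, x⁆ ^ k :=
    fun k z => ((hcen y x z).zpow_left k).eq
  have hyx : ∀ w : G, y ^ m * (x * w) = x * (y ^ m * (⁅y, x⁆ ^ m * w)) := by
    intro w
    rw [← mul_assoc, cl2_swap hcen x (y ^ m), cl2_comm_zpow_left hcen, mul_assoc, mul_assoc]
  have hT : (m + 1) * m / 2 = m + m * (m - 1) / 2 := by
    obtain ⟨j, hj⟩ : (2 : ℤ) ∣ m * (m - 1) := by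
      rcases Int.even_mul_succ_self (m - 1) with ⟨k, hk⟩
      exact ⟨k, by linarith⟩
    have hb : (m + 1) * m = 2 * m + 2 * j := by rw [← hj]; ring
    rw [hj, hb]
    omega
  symm
  rw [zpow_add_one x, zpow_add_one y, hT, zpow_add]
  simp only [mul_assoc]
  rw [hmv (m * (m - 1) / 2) x y, hmv2 (m * (m - 1) / 2) y,
    hyx (y * ⁅y, x⁆ ^ (m * (m - 1) / 2)), hmv m y (⁅y, x⁆ ^ (m * (m - 1) / 2))]

lemma cl2_mul_zpow (hcen : ∀ a b z : G, Commute ⁅a, b⁆ z) (x y : G) (n : ℤ) :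
    (x * y) ^ n = x ^ n * y ^ n * ⁅y, x⁆ ^ (n * (n - 1) / 2) := by
  induction n using Int.induction_on with
  | zero => simp
  | succ k ih =>
      rw [zpow_add_one, ih, ← cl2_key hcen,
        show ((k : ℤ) + 1) * ((k : ℤ) + 1 - 1) = ((k : ℤ) + 1) * (k : ℤ) from by ring]
  | pred k ih =>
      have key := cl2_key hcen x y (-(k : ℤ) - 1)
      rw [sub_add_cancel] at key
      have hstep : (x * y) ^ (-(k : ℤ) - 1) * (x * y) = (x * y) ^ (-(k : ℤ)) := by
        rw [← zpow_add_one, sub_add_cancel]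
      apply mul_right_cancel (b := x * y)
      rw [hstep, ih, key]

end Class2

/-- The commutator `[x, y] = x⁻¹ * y⁻¹ * x * y` in the paper's convention. -/
def pcomm {G : Type*} [Group G] (x y : G) : G := x⁻¹ * y⁻¹ * x * y

/-- let `p` be an odd prime, `G` a nonabelian finite `p`-group of class two,
and `c, d` integers with `d(2c+1) ≡ 1 (mod exp(G'))`.  Then `x ↦ x^d` is a bijection of
`G` satisfying `(xy)^d = x^d · y^d · [x^d, y^d]^c`, i.e. an isomorphism from `G` onto
`(G, ∘_{[c]})` where `x ∘_{[c]} y = x·y·[x,y]^c`. -/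
theorem stmt_8 {p : ℕ} (hp : p.Prime) (hodd : Odd p)
    {G : Type*} [Group G] [Fintype G] (hpG : IsPGroup p G)
    (hc2 : (⊤ : Subgroup G).lowerCentralSeries 2 = ⊥) (hc1 : (⊤ : Subgroup G).lowerCentralSeries 1 ≠ ⊥)
    (c d : ℤ)
    (hcd : d * (2 * c + 1) ≡ 1 [ZMOD (Monoid.exponent ↥(commutator G) : ℤ)]) :
    Function.Bijective (fun x : G => x ^ d) ∧
    ∀ x y : G, (x * y) ^ d = x ^ d * y ^ d * (pcomm (x ^ d) (y ^ d)) ^ c := by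
  classical
  haveI : Fact p.Prime := ⟨hp⟩
  -- commutators are central
  have hcen : ∀ a b z : G, Commute ⁅a, b⁆ z := by
    intro a b z
    rw [← commutatorElement_eq_one_iff_commute]
    have hmem : ⁅⁅a, b⁆, z⁆ ∈ (⊤ : Subgroup G).lowerCentralSeries 2 := by
      rw [Subgroup.lowerCentralSeries_succ]
      exact Subgroup.commutator_mem_commutator
        (by rw [Subgroup.top_lowerCentralSeries_one, commutator_def]
            exact Subgroup.commutator_mem_commutator (Subgroup.mem_top a) (Subgroup.mem_top b))
        (Subgroup.mem_top z)
    rw [hc2] at hmem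
    exact Subgroup.mem_bot.mp hmem
  set q : ℕ := Monoid.exponent ↥(commutator G) with hq
  have hpGq : IsPGroup p ↥(commutator G) := hpG.to_subgroup _
  have hnt : Nontrivial ↥(commutator G) := by
    rw [Subgroup.nontrivial_iff_ne_bot]
    rwa [Subgroup.top_lowerCentralSeries_one] at hc1
  have hpq : p ∣ q := by
    obtain ⟨g, hg1⟩ := exists_ne (1 : ↥(commutator G))
    obtain ⟨k, hk⟩ := hpGq g
    obtain ⟨m, hm, hordm⟩ := (Nat.dvd_prime_pow hp).mp (orderOf_dvd_of_pow_eq_one hk)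
    have hm0 : m ≠ 0 := by
      rintro rfl
      simp only [pow_zero] at hordm
      exact hg1 (orderOf_eq_one_iff.mp hordm)
    exact (hordm ▸ dvd_pow_self p hm0).trans (Monoid.order_dvd_exponent g)
  have hq0 : q ≠ 0 := Monoid.exponent_ne_zero_of_finite
  have hqodd : Odd q := by
    have hdvd : q ∣ Fintype.card ↥(commutator G) := Group.exponent_dvd_card
    obtain ⟨n, hn⟩ := IsPGroup.iff_card.mp hpGq
    rw [Nat.card_eq_fintype_card] at hn
    rw [hn] at hdvd
    obtain ⟨m, _, hqm⟩ := (Nat.dvd_prime_pow hp).mp hdvd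
    rw [hqm]
    exact hodd.pow
  -- p does not divide d
  have hpd : ¬ (p : ℤ) ∣ d := by
    intro hdvd
    have h1 : d * (2 * c + 1) ≡ 1 [ZMOD (p : ℤ)] :=
      hcd.of_dvd (Int.natCast_dvd_natCast.mpr hpq)
    have h0 : d ≡ 0 [ZMOD (p : ℤ)] := (Int.modEq_zero_iff_dvd).mpr hdvd
    have h2 := (h0.mul_right (2 * c + 1)).symm.trans h1
    rw [zero_mul] at h2
    have h3 : (p : ℤ) ∣ 1 := by simpa using h2.dvd
    have h4 : p ∣ 1 := Int.natCast_dvd_natCast.mp (by simpa using h3)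
    have h5 := Nat.le_of_dvd one_pos h4
    have h6 := hp.two_le
    omega
  constructor
  · -- bijectivity
    have hNdvd : Monoid.exponent G ∣ Fintype.card G := Group.exponent_dvd_card
    obtain ⟨n, hn⟩ := IsPGroup.iff_card.mp hpG
    rw [Nat.card_eq_fintype_card] at hn
    rw [hn] at hNdvd
    obtain ⟨k, _, hNk⟩ := (Nat.dvd_prime_pow hp).mp hNdvd
    have hpprime : Prime (p : ℤ) := Nat.prime_iff_prime_int.mp hp
    have hcop : IsCoprime d ((Monoid.exponent G : ℕ) : ℤ) := by
      have h1 : IsCoprime d ((p : ℤ)) := (hpprime.coprime_iff_not_dvd.mpr hpd).symm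
      have h2 : IsCoprime d ((p : ℤ) ^ k) := h1.pow_right
      rwa [hNk, Nat.cast_pow]
    obtain ⟨u, v, huv⟩ := hcop
    have hmod : d * u ≡ 1 [ZMOD ((Monoid.exponent G : ℕ) : ℤ)] :=
      Int.modEq_iff_dvd.mpr ⟨v, by linarith⟩
    have hde : ∀ x : G, x ^ (d * u) = x := by
      intro x
      have hx : d * u ≡ 1 [ZMOD ((orderOf x : ℕ) : ℤ)] :=
        hmod.of_dvd (Int.natCast_dvd_natCast.mpr (Monoid.order_dvd_exponent x))
      calc x ^ (d * u) = x ^ (1 : ℤ) := zpow_eq_zpow_iff_modEq.mpr hx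
        _ = x := zpow_one x
    refine Function.bijective_iff_has_inverse.mpr ⟨fun x => x ^ u, fun x => ?_, fun x => ?_⟩
    · show (x ^ d) ^ u = x
      rw [← zpow_mul, hde]
    · show (x ^ u) ^ d = x
      rw [← zpow_mul, mul_comm, hde]
  · -- the identity
    intro x y
    have ht : ⁅y, x⁆ ∈ commutator G := by
      rw [commutator_def]
      exact Subgroup.commutator_mem_commutator (Subgroup.mem_top y) (Subgroup.mem_top x)
    have hord : ((orderOf ⁅y, x⁆ : ℕ) : ℤ) ∣ ((q : ℕ) : ℤ) := by
      have h1 := Monoid.order_dvd_exponent (⟨⁅y, x⁆, ht⟩ : ↥(commutator G))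
      rw [Subgroup.orderOf_mk] at h1
      exact_mod_cast h1
    have hpc : pcomm (x ^ d) (y ^ d) = ⁅y, x⁆ ^ (-(d * d)) := by
      have h1 : pcomm (x ^ d) (y ^ d) = ⁅(x ^ d)⁻¹, (y ^ d)⁻¹⁆ := by
        simp only [pcomm, commutatorElement_def, inv_inv]
      have h2 : ⁅x, y⁆ = ⁅y, x⁆⁻¹ := (commutatorElement_inv y x).symm
      rw [h1, ← zpow_neg x, ← zpow_neg y, cl2_comm_zpow_left hcen, cl2_comm_zpow_right hcen,
        ← zpow_mul, h2, inv_zpow, ← zpow_neg]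
      congr 1
      ring
    rw [cl2_mul_zpow hcen, hpc, ← zpow_mul]
    congr 1
    rw [zpow_eq_zpow_iff_modEq]
    apply Int.ModEq.of_dvd hord
    -- reduce to arithmetic mod q
    have hdd : d * d * (2 * c + 1) ≡ d [ZMOD ((q : ℕ) : ℤ)] := by
      have h := hcd.mul_left d
      rw [mul_one] at h
      calc d * d * (2 * c + 1) = d * (d * (2 * c + 1)) := by ring
        _ ≡ d [ZMOD ((q : ℕ) : ℤ)] := h
    have h2A : 2 * (d * (d - 1) / 2) = d * d - d := by
      have h2 : (2 : ℤ) ∣ d * (d - 1) := by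
        rcases Int.even_mul_succ_self (d - 1) with ⟨k, hk⟩
        exact ⟨k, by linarith⟩
      rw [Int.mul_ediv_cancel' h2]
      ring
    have h2AB : 2 * (d * (d - 1) / 2) ≡ 2 * (-(d * d) * c) [ZMOD ((q : ℕ) : ℤ)] := by
      rw [h2A]
      have := (Int.ModEq.refl (d * d)).sub hdd
      calc d * d - d ≡ d * d - d * d * (2 * c + 1) [ZMOD ((q : ℕ) : ℤ)] := this.symm
        _ = 2 * (-(d * d) * c) := by ring
    have hdvd2 : ((q : ℕ) : ℤ) ∣ 2 * ((-(d * d) * c) - d * (d - 1) / 2) := by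
      have := h2AB.dvd
      have heq : 2 * ((-(d * d) * c) - d * (d - 1) / 2)
          = 2 * (-(d * d) * c) - 2 * (d * (d - 1) / 2) := by ring
      rwa [heq]
    have hgcd : Int.gcd ((q : ℕ) : ℤ) 2 = 1 := by
      have hcop2 : Nat.Coprime 2 q := (Nat.prime_two.coprime_iff_not_dvd).mpr
        (by intro h; rcases hqodd with ⟨j, hj⟩; omega)
      simpa [Int.gcd, Int.natAbs_natCast] using hcop2.symm
    exact Int.modEq_iff_dvd.mpr (Int.dvd_of_dvd_mul_right_of_gcd_one hdvd2 hgcd)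
end

section
/- Let p be an odd prime and let G be a finite p-group of nilpotency class two with G' = Z(G). Let Δ₁ and Δ₂ be bilinear forms on G with associated circle operations ∘₁ and ∘₂, and suppose the form (x, y) ↦ Δ₁(x, y)⁻¹·Δ₂(x, y) is symmetric. Then there exists a bijection θ: G → G with θ(x ∘₁ y) = θ(x) ∘₂ θ(y) for all x, y ∈ G; that is, the groups (G, ∘₁) and (G, ∘₂) are isomorphic. -/
open scoped commutatorElement in
theorem pcomm_mem_commutator {G : Type*} [Group G] (x y : G) :
    pcomm x y ∈ commutator G := by
  have h : pcomm x y = ⁅x⁻¹, y⁻¹⁆ := by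
    simp [pcomm, commutatorElement_def, mul_assoc]
  rw [h, commutator_def]
  exact Subgroup.commutator_mem_commutator (Subgroup.mem_top _) (Subgroup.mem_top _)

/-- A bilinear form on a group `G` of class two with `G' = Z(G)`: a map
`Δ : G/G' × G/G' → G'` which is multiplicative in each variable. -/
def IsBilinearForm {G : Type*} [Group G] (Δ : G → G → G) : Prop :=
  (∀ x y : G, Δ x y ∈ commutator G) ∧
  (∀ x y w : G, w ∈ commutator G → Δ (x * w) y = Δ x y) ∧
  (∀ x y w : G, w ∈ commutator G → Δ x (y * w) = Δ x y) ∧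
  (∀ x₁ x₂ y : G, Δ (x₁ * x₂) y = Δ x₁ y * Δ x₂ y) ∧
  (∀ x y₁ y₂ : G, Δ x (y₁ * y₂) = Δ x y₁ * Δ x y₂)

/-- The circle operation `x ∘ y = x·y·Δ(x, y)` associated to a bilinear form `Δ`. -/
def circ {G : Type*} [Group G] (Δ : G → G → G) (x y : G) : G := x * y * Δ x y

/-- The circle inverse `x^{⊖1} = x⁻¹·Δ(x, x)`. -/
def oinv {G : Type*} [Group G] (Δ : G → G → G) (x : G) : G := x⁻¹ * Δ x x

/-- The circle commutator `[x, y]_∘ = x^{⊖1} ∘ y^{⊖1} ∘ x ∘ y`. -/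
def ocomm {G : Type*} [Group G] (Δ : G → G → G) (x y : G) : G :=
  circ Δ (circ Δ (circ Δ (oinv Δ x) (oinv Δ y)) x) y

/-- if `Δ₁, Δ₂` are bilinear forms on `G` whose "difference"
`Δ₁⁻¹Δ₂` is symmetric, then the circle groups `(G, ∘₁)` and `(G, ∘₂)` are isomorphic. -/
theorem stmt_10 {p : ℕ} (hp : p.Prime) (hodd : Odd p)
    {G : Type*} [Group G] [Fintype G] (hpG : IsPGroup p G)
    (hc2 : (⊤ : Subgroup G).lowerCentralSeries 2 = ⊥) (hc1 : (⊤ : Subgroup G).lowerCentralSeries 1 ≠ ⊥)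
    (hGZ : commutator G = Subgroup.center G)
    (Δ₁ Δ₂ : G → G → G) (hΔ₁ : IsBilinearForm Δ₁) (hΔ₂ : IsBilinearForm Δ₂)
    (hsym : ∀ x y : G, (Δ₁ x y)⁻¹ * Δ₂ x y = (Δ₁ y x)⁻¹ * Δ₂ y x) :
    ∃ θ : G → G, Function.Bijective θ ∧
      ∀ x y : G, θ (circ Δ₁ x y) = circ Δ₂ (θ x) (θ y) := by
  classical
  haveI := Fact.mk hp
  obtain ⟨h1m, h1l, h1r, h1a, h1b⟩ := hΔ₁
  obtain ⟨h2m, h2l, h2r, h2a, h2b⟩ := hΔ₂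
  -- central elements commute with everything
  have sw : ∀ w : G, w ∈ commutator G → ∀ g : G, w * g = g * w := by
    intro w hw g
    rw [hGZ] at hw
    exact (Subgroup.mem_center_iff.mp hw g).symm
  -- the difference form
  set D : G → G → G := fun x y => (Δ₁ x y)⁻¹ * Δ₂ x y with hDdef
  have hDmem : ∀ x y : G, D x y ∈ commutator G := fun x y =>
    mul_mem (inv_mem (h1m x y)) (h2m x y)
  have hDl : ∀ x y w : G, w ∈ commutator G → D (x * w) y = D x y := by
    intro x y w hw; simp only [hDdef]; rw [h1l x y w hw, h2l x y w hw]
  have hDr : ∀ x y w : G, w ∈ commutator G → D x (y * w) = D x y := by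
    intro x y w hw; simp only [hDdef]; rw [h1r x y w hw, h2r x y w hw]
  have hDsym : ∀ x y : G, D x y = D y x := hsym
  -- rearrangement helper
  have mix : ∀ a b c d : G, c ∈ commutator G → (a * c) * (b * d) = (a * b) * (c * d) := by
    intro a b c d hc
    rw [mul_assoc, ← mul_assoc c b d, sw c hc b, mul_assoc b, ← mul_assoc]
  have hDa : ∀ x₁ x₂ y : G, D (x₁ * x₂) y = D x₁ y * D x₂ y := by
    intro a b y
    simp only [hDdef]
    rw [h1a, h2a, mul_inv_rev, sw (Δ₁ b y)⁻¹ (inv_mem (h1m b y)) (Δ₁ a y)⁻¹,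
      mix _ _ _ _ (inv_mem (h1m b y))]
  have hDb : ∀ x y₁ y₂ : G, D x (y₁ * y₂) = D x y₁ * D x y₂ := by
    intro x a b
    rw [hDsym x (a * b), hDa, hDsym a x, hDsym b x]
  -- exponent facts
  set n := Monoid.exponent G with hn
  have hpow : ∀ g : G, g ^ n = 1 := fun g => Monoid.pow_exponent_eq_one g
  obtain ⟨k, hk⟩ := (IsPGroup.iff_card (p := p) (G := G)).mp hpG
  have hdvd : n ∣ p ^ k := by
    rw [← hk, Nat.card_eq_fintype_card]; exact Group.exponent_dvd_card
  have hOdd : Odd n := by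
    obtain ⟨d, hd⟩ := hodd.pow (n := k)
    rcases Nat.even_or_odd n with he | ho
    · exfalso
      obtain ⟨r, hr⟩ := he
      have h2 : (2 : ℕ) ∣ p ^ k := dvd_trans ⟨r, by omega⟩ hdvd
      obtain ⟨c, hc⟩ := h2
      omega
    · exact ho
  set m := (n + 1) / 2 with hm
  have hmm : m + m = n + 1 := by
    obtain ⟨d, hd⟩ := hOdd; omega
  have hsq : ∀ g : G, g ^ m * g ^ m = g := by
    intro g
    rw [← pow_add, hmm, pow_succ, hpow, one_mul]
  -- the bijection
  set θ : G → G := fun x => x * (D x x) ^ m with hθ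
  have hθmem : ∀ x : G, (D x x) ^ m ∈ commutator G := fun x => pow_mem (hDmem x x) m
  refine ⟨θ, ?_, ?_⟩
  · rw [Finite.injective_iff_bijective.symm]
    intro a b hab
    simp only [hθ] at hab
    have hab' : a = b * ((D b b) ^ m * ((D a a) ^ m)⁻¹) := by
      rw [← mul_assoc, ← hab, mul_inv_cancel_right]
    have hw : (D b b) ^ m * ((D a a) ^ m)⁻¹ ∈ commutator G :=
      mul_mem (hθmem b) (inv_mem (hθmem a))
    have hDeq : D a a = D b b := by
      conv_lhs => rw [hab']
      rw [hDl _ _ _ hw, hDr _ _ _ hw]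
    rw [hDeq] at hab
    exact mul_right_cancel hab
  · intro x y
    have hΔ₁mem := h1m x y
    -- abbreviations
    set A := D x x with hA
    set B := D x y with hB
    set C := D y y with hC
    have hAm : A ^ m ∈ commutator G := pow_mem (hDmem x x) m
    have hBm : B ^ m ∈ commutator G := pow_mem (hDmem x y) m
    have hCm : C ^ m ∈ commutator G := pow_mem (hDmem y y) m
    have hBmem : B ∈ commutator G := hDmem x y
    -- compute D of the product
    have hDprod : D (circ Δ₁ x y) (circ Δ₁ x y) = (A * B) * (B * C) := by
      show D (x * y * Δ₁ x y) (x * y * Δ₁ x y) = (A * B) * (B * C)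
      rw [hDl _ _ _ hΔ₁mem, hDr _ _ _ hΔ₁mem, hDa, hDb, hDb, hDsym y x]
    -- LHS
    have hLHS : θ (circ Δ₁ x y) =
        (x * y) * Δ₁ x y * (A ^ m * (B * C ^ m)) := by
      show circ Δ₁ x y * (D (circ Δ₁ x y) (circ Δ₁ x y)) ^ m = _
      rw [hDprod]
      have c1 : Commute (A * B) (B * C) :=
        sw _ (mul_mem (hDmem x x) (hDmem x y)) _
      have c2 : Commute A B := sw _ (hDmem x x) _
      have c3 : Commute B C := sw _ (hDmem x y) _
      rw [c1.mul_pow, c2.mul_pow, c3.mul_pow, mul_assoc (A ^ m) (B ^ m),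
        ← mul_assoc (B ^ m) (B ^ m), hsq B]
      rfl
    rw [hLHS]
    -- RHS
    show (x * y) * Δ₁ x y * (A ^ m * (B * C ^ m)) =
      (x * A ^ m) * (y * C ^ m) * Δ₂ (x * A ^ m) (y * C ^ m)
    rw [h2l _ _ _ hAm, h2r _ _ _ hCm]
    have hΔ₂eq : Δ₂ x y = Δ₁ x y * B := by
      rw [hB, hDdef]; group
    rw [hΔ₂eq, mix x y (A ^ m) (C ^ m) hAm]
    -- now: (x*y)*Δ₁xy*(A^m*(B*C^m)) = (x*y)*(A^m*C^m)*(Δ₁xy*B)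
    rw [mul_assoc (x * y) (Δ₁ x y), mul_assoc (x * y) (A ^ m * C ^ m)]
    congr 1
    -- Δ₁xy*(A^m*(B*C^m)) = (A^m*C^m)*(Δ₁xy*B)
    rw [mul_assoc (A ^ m) (C ^ m), sw (C ^ m) hCm (Δ₁ x y * B),
      mul_assoc (Δ₁ x y) B (C ^ m), ← mul_assoc (A ^ m) (Δ₁ x y),
      sw (A ^ m) hAm (Δ₁ x y), mul_assoc (Δ₁ x y) (A ^ m)]
end

section
/- Let p be an odd prime and let G be a finite p-group of nilpotency class two with G' = Z(G). Let Δ be an anti-symmetric bilinear form on G with associated circle operation x ∘ y = x·y·Δ(x, y). Then the derived subgroup (G, ∘)' of the group (G, ∘) equals G' if and only if the subgroup of G' generated by the set {[x, y]·Δ(x, y)² : x, y ∈ G} is all of G'. -/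
/-- The derived subgroup of the circle group `(G, ∘)`, as a set: the smallest subset of
`G` containing all `∘`-commutators and closed under `∘` and `∘`-inversion. -/
def circDer {G : Type*} [Group G] (Δ : G → G → G) : Set G :=
  ⋂₀ {T : Set G | (∀ x y : G, ocomm Δ x y ∈ T) ∧
      (∀ a ∈ T, ∀ b ∈ T, circ Δ a b ∈ T) ∧ (∀ a ∈ T, oinv Δ a ∈ T)}

section Aux

variable {G : Type*} [Group G] {Δ : G → G → G}

lemma bf_one_left (h : IsBilinearForm Δ) (y : G) : Δ 1 y = 1 := by
  have := h.2.2.2.1 1 1 y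
  rw [one_mul] at this
  exact (left_eq_mul.mp this)

lemma bf_one_right (h : IsBilinearForm Δ) (x : G) : Δ x 1 = 1 := by
  have := h.2.2.2.2 x 1 1
  rw [one_mul] at this
  exact (left_eq_mul.mp this)

lemma bf_inv_left (h : IsBilinearForm Δ) (x y : G) : Δ x⁻¹ y = (Δ x y)⁻¹ := by
  have := h.2.2.2.1 x x⁻¹ y
  rw [mul_inv_cancel, bf_one_left h] at this
  exact (inv_eq_of_mul_eq_one_right this.symm).symm

lemma bf_inv_right (h : IsBilinearForm Δ) (x y : G) : Δ x y⁻¹ = (Δ x y)⁻¹ := by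
  have := h.2.2.2.2 x y y⁻¹
  rw [mul_inv_cancel, bf_one_right h] at this
  exact (inv_eq_of_mul_eq_one_right this.symm).symm

lemma bf_comm_left (h : IsBilinearForm Δ) {w : G} (hw : w ∈ commutator G) (y : G) :
    Δ w y = 1 := by
  have := h.2.1 1 y w hw
  rw [one_mul] at this
  rw [this, bf_one_left h]

/-- Move a central element past one factor to the right. -/
lemma cen_swap {w : G} (hw : w ∈ Subgroup.center G) (g t : G) :
    w * (g * t) = g * (w * t) := by
  rw [← mul_assoc, show w * g = g * w from (Subgroup.mem_center_iff.mp hw g).symm, mul_assoc]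

lemma step1 {w : G} (hw : w ∈ Subgroup.center G) (x y w' r : G) :
    x * w * (y * w') * r = x * (y * (w * (w' * r))) := by
  simp only [mul_assoc]
  rw [cen_swap hw y (w' * r)]

lemma step2 {w : G} (hw : w ∈ Subgroup.center G) (x y z r : G) :
    x * (y * w) * z * r = x * (y * (z * (w * r))) := by
  simp only [mul_assoc]
  rw [cen_swap hw z r]

lemma step3 {w : G} (hw : w ∈ Subgroup.center G) (x y z t r : G) :
    x * (y * (z * w)) * t * r = x * (y * (z * (t * (w * r)))) := by
  simp only [mul_assoc]
  rw [cen_swap hw t r]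

/-- The key computation: the circle commutator equals `[x,y]·Δ(x,y)²`. -/
lemma ocomm_eq (h : IsBilinearForm Δ) (hGZ : commutator G = Subgroup.center G)
    (hanti : ∀ x y : G, Δ y x = (Δ x y)⁻¹) (x y : G) :
    ocomm Δ x y = pcomm x y * (Δ x y) ^ 2 := by
  obtain ⟨hmem, hleft, hright, hml, hmr⟩ := h
  have hbf : IsBilinearForm Δ := ⟨hmem, hleft, hright, hml, hmr⟩
  have hacen : Δ x x ∈ Subgroup.center G := hGZ ▸ hmem x x
  have hbcen : Δ y y ∈ Subgroup.center G := hGZ ▸ hmem y y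
  have hccen : Δ x y ∈ Subgroup.center G := hGZ ▸ hmem x y
  have hw1mem : Δ x x * (Δ y y * Δ x y) ∈ commutator G :=
    mul_mem (hmem x x) (mul_mem (hmem y y) (hmem x y))
  have hw1cen : Δ x x * (Δ y y * Δ x y) ∈ Subgroup.center G := hGZ ▸ hw1mem
  have hw2mem : Δ x x * (Δ y y * Δ x y) * ((Δ x x)⁻¹ * Δ x y) ∈ commutator G :=
    mul_mem hw1mem (mul_mem (inv_mem (hmem x x)) (hmem x y))
  have hw2cen : Δ x x * (Δ y y * Δ x y) * ((Δ x x)⁻¹ * Δ x y) ∈ Subgroup.center G :=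
    hGZ ▸ hw2mem
  -- step 1
  have h1 : circ Δ (oinv Δ x) (oinv Δ y) = x⁻¹ * (y⁻¹ * (Δ x x * (Δ y y * Δ x y))) := by
    have hd : Δ (oinv Δ x) (oinv Δ y) = Δ x y := by
      unfold oinv
      rw [hleft _ _ _ (hmem x x), hright _ _ _ (hmem y y), bf_inv_left hbf,
        bf_inv_right hbf, inv_inv]
    unfold circ
    rw [hd]
    unfold oinv
    exact step1 hacen x⁻¹ y⁻¹ (Δ y y) (Δ x y)
  -- step 2
  have h2 : circ Δ (x⁻¹ * (y⁻¹ * (Δ x x * (Δ y y * Δ x y)))) x =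
      x⁻¹ * (y⁻¹ * (x * (Δ x x * (Δ y y * Δ x y) * ((Δ x x)⁻¹ * Δ x y)))) := by
    have hd : Δ (x⁻¹ * (y⁻¹ * (Δ x x * (Δ y y * Δ x y)))) x = (Δ x x)⁻¹ * Δ x y := by
      rw [show x⁻¹ * (y⁻¹ * (Δ x x * (Δ y y * Δ x y))) =
          (x⁻¹ * y⁻¹) * (Δ x x * (Δ y y * Δ x y)) from (mul_assoc _ _ _).symm,
        hleft _ _ _ hw1mem, hml, bf_inv_left hbf, bf_inv_left hbf, ← hanti y x]
    unfold circ
    rw [hd]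
    exact step2 hw1cen x⁻¹ y⁻¹ x ((Δ x x)⁻¹ * Δ x y)
  -- step 3
  have h3 : circ Δ (x⁻¹ * (y⁻¹ * (x * (Δ x x * (Δ y y * Δ x y) * ((Δ x x)⁻¹ * Δ x y))))) y =
      x⁻¹ * (y⁻¹ * (x * (y * (Δ x x * (Δ y y * Δ x y) * ((Δ x x)⁻¹ * Δ x y) *
        ((Δ x y)⁻¹ * ((Δ y y)⁻¹ * Δ x y)))))) := by
    have hd : Δ (x⁻¹ * (y⁻¹ * (x * (Δ x x * (Δ y y * Δ x y) * ((Δ x x)⁻¹ * Δ x y))))) y =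
        (Δ x y)⁻¹ * ((Δ y y)⁻¹ * Δ x y) := by
      rw [show x⁻¹ * (y⁻¹ * (x * (Δ x x * (Δ y y * Δ x y) * ((Δ x x)⁻¹ * Δ x y)))) =
          (x⁻¹ * (y⁻¹ * x)) * (Δ x x * (Δ y y * Δ x y) * ((Δ x x)⁻¹ * Δ x y)) from by
            simp only [mul_assoc],
        hleft _ _ _ hw2mem, hml, hml, bf_inv_left hbf, bf_inv_left hbf]
    unfold circ
    rw [hd]
    exact step3 hw2cen x⁻¹ y⁻¹ x y ((Δ x y)⁻¹ * ((Δ y y)⁻¹ * Δ x y))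
  -- the central factor collapses to (Δ x y)²
  have hW : Δ x x * (Δ y y * Δ x y) * ((Δ x x)⁻¹ * Δ x y) *
      ((Δ x y)⁻¹ * ((Δ y y)⁻¹ * Δ x y)) = (Δ x y) ^ 2 := by
    have hcg : (⟨Δ x x, hacen⟩ * (⟨Δ y y, hbcen⟩ * ⟨Δ x y, hccen⟩) *
        ((⟨Δ x x, hacen⟩ : Subgroup.center G)⁻¹ * ⟨Δ x y, hccen⟩) *
        ((⟨Δ x y, hccen⟩ : Subgroup.center G)⁻¹ *
          ((⟨Δ y y, hbcen⟩ : Subgroup.center G)⁻¹ * ⟨Δ x y, hccen⟩)) : Subgroup.center G) =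
        (⟨Δ x y, hccen⟩ : Subgroup.center G) ^ 2 := by
      letI : CommGroup (Subgroup.center G) :=
        { mul_comm := fun a b => Subtype.ext (Subgroup.mem_center_iff.mp b.2 a) }
      apply Additive.ofMul.injective
      simp only [ofMul_mul, ofMul_inv, ofMul_pow]
      abel
    exact congrArg Subtype.val hcg
  show circ Δ (circ Δ (circ Δ (oinv Δ x) (oinv Δ y)) x) y = _
  rw [h1, h2, h3, hW, pcomm]
  simp only [mul_assoc]

end Aux

/-- for an anti-symmetric bilinear form `Δ` on `G`, the derived subgroup
`(G, ∘)'` of the circle group equals `G'` if and only if the subgroup of `G'` generated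
by `{[x, y]·Δ(x, y)² : x, y ∈ G}` is all of `G'`. -/
theorem stmt_13 {p : ℕ} (hp : p.Prime) (hodd : Odd p)
    {G : Type*} [Group G] [Fintype G] (hpG : IsPGroup p G)
    (hc2 : (⊤ : Subgroup G).lowerCentralSeries 2 = ⊥) (hc1 : (⊤ : Subgroup G).lowerCentralSeries 1 ≠ ⊥)
    (hGZ : commutator G = Subgroup.center G)
    (Δ : G → G → G) (hΔ : IsBilinearForm Δ)
    (hanti : ∀ x y : G, Δ y x = (Δ x y)⁻¹) :
    circDer Δ = (commutator G : Set G) ↔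
      Subgroup.closure {g : G | ∃ x y : G, g = pcomm x y * (Δ x y) ^ 2} = commutator G := by
  set S : Set G := {g : G | ∃ x y : G, g = pcomm x y * (Δ x y) ^ 2} with hS
  have key : ∀ x y : G, ocomm Δ x y = pcomm x y * (Δ x y) ^ 2 := ocomm_eq hΔ hGZ hanti
  have hS_sub : S ⊆ (commutator G : Set G) := by
    rintro g ⟨x, y, rfl⟩
    exact mul_mem (pcomm_mem_commutator x y) (pow_mem (hΔ.1 x y) 2)
  have hHle : Subgroup.closure S ≤ commutator G := (Subgroup.closure_le _).mpr hS_sub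
  -- Δ vanishes when the first argument is in the commutator subgroup
  have hvan : ∀ {w : G}, w ∈ commutator G → ∀ y : G, Δ w y = 1 :=
    fun hw y => bf_comm_left hΔ hw y
  -- the closure of S is a member of the defining family of circDer
  have hfam : (Subgroup.closure S : Set G) ∈
      {T : Set G | (∀ x y : G, ocomm Δ x y ∈ T) ∧
        (∀ a ∈ T, ∀ b ∈ T, circ Δ a b ∈ T) ∧ (∀ a ∈ T, oinv Δ a ∈ T)} := by
    refine ⟨fun x y => ?_, fun u hu v hv => ?_, fun u hu => ?_⟩
    · rw [key x y]; exact Subgroup.subset_closure ⟨x, y, rfl⟩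
    · have : circ Δ u v = u * v := by
        rw [circ, hvan (hHle hu) v, mul_one]
      rw [this]; exact mul_mem hu hv
    · have : oinv Δ u = u⁻¹ := by
        rw [oinv, hvan (hHle hu) u, mul_one]
      rw [this]; exact inv_mem hu
  have hsub1 : circDer Δ ⊆ (Subgroup.closure S : Set G) := Set.sInter_subset_of_mem hfam
  -- circDer itself is closed under the three operations
  have hcd_ocomm : ∀ x y : G, ocomm Δ x y ∈ circDer Δ :=
    fun x y => Set.mem_sInter.mpr fun _ hT => hT.1 x y
  have hcd_circ : ∀ u ∈ circDer Δ, ∀ v ∈ circDer Δ, circ Δ u v ∈ circDer Δ :=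
    fun u hu v hv => Set.mem_sInter.mpr fun T hT =>
      hT.2.1 u (Set.mem_sInter.mp hu T hT) v (Set.mem_sInter.mp hv T hT)
  have hcd_oinv : ∀ u ∈ circDer Δ, oinv Δ u ∈ circDer Δ :=
    fun u hu => Set.mem_sInter.mpr fun T hT => hT.2.2 u (Set.mem_sInter.mp hu T hT)
  have hcd_comm : circDer Δ ⊆ (commutator G : Set G) := hsub1.trans hHle
  -- circDer is a subgroup
  have hone : (1 : G) ∈ circDer Δ := by
    have h11 : ocomm Δ 1 1 = 1 := by
      rw [key 1 1, pcomm]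
      have : Δ (1 : G) 1 = 1 := bf_one_left hΔ 1
      rw [this]; simp
    have := hcd_ocomm 1 1
    rwa [h11] at this
  let K : Subgroup G :=
    { carrier := circDer Δ
      one_mem' := hone
      mul_mem' := by
        intro u v hu hv
        have : u * v = circ Δ u v := by
          rw [circ, hvan (hcd_comm hu) v, mul_one]
        rw [this]
        exact hcd_circ u hu v hv
      inv_mem' := by
        intro u hu
        have : u⁻¹ = oinv Δ u := by
          rw [oinv, hvan (hcd_comm hu) u, mul_one]
        rw [this]
        exact hcd_oinv u hu }
  have hsub2 : (Subgroup.closure S : Set G) ⊆ circDer Δ := by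
    have : Subgroup.closure S ≤ K := (Subgroup.closure_le _).mpr (by
      rintro g ⟨x, y, rfl⟩
      have := hcd_ocomm x y
      rwa [key x y] at this)
    exact fun g hg => this hg
  have heq : circDer Δ = (Subgroup.closure S : Set G) := Set.Subset.antisymm hsub1 hsub2
  rw [heq]
  exact Iff.symm SetLike.ext'_iff
end

section
/- Let p be an odd prime and let G be a finite p-group of nilpotency class two with G' = Z(G). Let σ be an endomorphism of G' such that the map τ: G' → G', τ(z) = z·σ(z)², is an automorphism of G', and let ∘ be the operation x ∘ y = x·y·σ([x, y]). Then G and (G, ∘) are isoclinic; more precisely: Z(G, ∘) = Z(G) = G'; the derived subgroup (G, ∘)' equals G'; the identity map on G induces an isomorphism G/Z(G) → (G, ∘)/Z(G, ∘); and τ is an isomorphism G' → (G, ∘)' satisfying τ([x, y]) = [x, y]_∘ for all x, y ∈ G. -/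
/-- The anti-symmetric bilinear form `Δ_σ(x, y) = σ([x, y])` associated to an
endomorphism `σ` of `G'`. -/
def deltaSigma {G : Type*} [Group G] (σ : ↥(commutator G) →* ↥(commutator G))
    (x y : G) : G :=
  ↑(σ ⟨pcomm x y, pcomm_mem_commutator x y⟩)

/-- The map `τ : z ↦ z·σ(z)²` on `G'`. -/
def tauFun {G : Type*} [Group G] (σ : ↥(commutator G) →* ↥(commutator G))
    (z : ↥(commutator G)) : ↥(commutator G) :=
  z * σ z ^ 2

namespace Stmt15Aux

variable {G : Type*} [Group G]

lemma central_mul_comm (hGZ : commutator G = Subgroup.center G) {c : G}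
    (hc : c ∈ commutator G) (g : G) : c * g = g * c := by
  rw [hGZ] at hc
  exact (Subgroup.mem_center_iff.mp hc g).symm

lemma inv_central {z : G} (hz : ∀ g, z * g = g * z) (g : G) : z⁻¹ * g = g * z⁻¹ := by
  calc z⁻¹ * g = z⁻¹ * (g * z) * z⁻¹ := by group
    _ = z⁻¹ * (z * g) * z⁻¹ := by rw [← hz g]
    _ = g * z⁻¹ := by group

lemma conj_central {z : G} (hz : ∀ g, z * g = g * z) (a : G) : z⁻¹ * (a * z) = a := by
  rw [← hz a]; group

lemma pcomm_self_inv (x : G) : pcomm x⁻¹ x = 1 := by unfold pcomm; group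
lemma pcomm_inv_self (x : G) : pcomm x x⁻¹ = 1 := by unfold pcomm; group
lemma pcomm_self (x : G) : pcomm x x = 1 := by unfold pcomm; group
lemma pcomm_one_left (y : G) : pcomm 1 y = 1 := by unfold pcomm; group
lemma pcomm_swap (x y : G) : pcomm y x = (pcomm x y)⁻¹ := by unfold pcomm; group

lemma pcomm_central_left {a : G} (ha : ∀ g, a * g = g * a) (b : G) : pcomm a b = 1 := by
  unfold pcomm
  calc a⁻¹ * b⁻¹ * a * b = a⁻¹ * (b⁻¹ * a) * b := by group
    _ = a⁻¹ * (a * b⁻¹) * b := by rw [← ha b⁻¹]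
    _ = 1 := by group

lemma pcomm_mul_left_central {z : G} (hz : ∀ g, z * g = g * z) (x y : G) :
    pcomm (x * z) y = pcomm x y := by
  calc pcomm (x * z) y = z⁻¹ * ((x⁻¹ * y⁻¹ * x) * z) * y := by unfold pcomm; group
    _ = (x⁻¹ * y⁻¹ * x) * y := by rw [conj_central hz]
    _ = pcomm x y := by unfold pcomm; group

lemma pcomm_mul_left (hGZ : commutator G = Subgroup.center G) (a b y : G) :
    pcomm (a * b) y = pcomm a y * pcomm b y := by
  have hc := central_mul_comm hGZ (pcomm_mem_commutator a y)
  calc pcomm (a * b) y = b⁻¹ * (pcomm a y * (y⁻¹ * b * y)) := by unfold pcomm; group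
    _ = b⁻¹ * pcomm a y * (y⁻¹ * b * y) := (mul_assoc _ _ _).symm
    _ = pcomm a y * b⁻¹ * (y⁻¹ * b * y) := by rw [← hc b⁻¹]
    _ = pcomm a y * pcomm b y := by unfold pcomm; group

lemma pcomm_inv_left (hGZ : commutator G = Subgroup.center G) (x y : G) :
    pcomm x⁻¹ y = (pcomm x y)⁻¹ := by
  have hc := inv_central (central_mul_comm hGZ (pcomm_mem_commutator x y))
  calc pcomm x⁻¹ y = x * (pcomm x y)⁻¹ * x⁻¹ := by unfold pcomm; group
    _ = (pcomm x y)⁻¹ * x * x⁻¹ := by rw [← hc x]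
    _ = (pcomm x y)⁻¹ := by group

lemma pcomm_inv_inv (hGZ : commutator G = Subgroup.center G) (x y : G) :
    pcomm x⁻¹ y⁻¹ = pcomm x y := by
  have hc := central_mul_comm hGZ (pcomm_mem_commutator x y)
  calc pcomm x⁻¹ y⁻¹ = (x * y) * pcomm x y * (x * y)⁻¹ := by unfold pcomm; group
    _ = pcomm x y * (x * y) * (x * y)⁻¹ := by rw [← hc (x * y)]
    _ = pcomm x y := by group

variable (σ : ↥(commutator G) →* ↥(commutator G))

lemma deltaSigma_mem (x y : G) : deltaSigma σ x y ∈ commutator G :=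
  (σ ⟨pcomm x y, pcomm_mem_commutator x y⟩).2

lemma deltaSigma_comm (hGZ : commutator G = Subgroup.center G) (x y g : G) :
    deltaSigma σ x y * g = g * deltaSigma σ x y :=
  central_mul_comm hGZ (deltaSigma_mem σ x y) g

lemma deltaSigma_congr {x y x' y' : G} (h : pcomm x y = pcomm x' y') :
    deltaSigma σ x y = deltaSigma σ x' y' :=
  congrArg _ (congrArg σ (Subtype.ext h))

lemma deltaSigma_eq_one {x y : G} (h : pcomm x y = 1) : deltaSigma σ x y = 1 := by
  unfold deltaSigma
  have h1 : (⟨pcomm x y, pcomm_mem_commutator x y⟩ : ↥(commutator G)) = 1 := Subtype.ext h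
  rw [h1, map_one, OneMemClass.coe_one]

lemma deltaSigma_swap (x y : G) : deltaSigma σ y x = (deltaSigma σ x y)⁻¹ := by
  unfold deltaSigma
  rw [show (⟨pcomm y x, pcomm_mem_commutator y x⟩ : ↥(commutator G))
      = (⟨pcomm x y, pcomm_mem_commutator x y⟩ : ↥(commutator G))⁻¹ from
      Subtype.ext (pcomm_swap x y), map_inv, InvMemClass.coe_inv]

lemma oinv_eq (x : G) : oinv (deltaSigma σ) x = x⁻¹ := by
  unfold oinv
  rw [deltaSigma_eq_one σ (pcomm_self x), mul_one]

lemma central_word (x y z : G) (hz : ∀ g, z * g = g * z) :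
    x⁻¹ * y⁻¹ * z * x * z * y * 1 = pcomm x y * z ^ 2 := by
  rw [mul_one, sq]
  calc x⁻¹ * y⁻¹ * z * x * z * y
      = x⁻¹ * y⁻¹ * (z * x) * z * y := by group
    _ = x⁻¹ * y⁻¹ * (x * z) * z * y := by rw [hz x]
    _ = x⁻¹ * y⁻¹ * x * (z * (z * y)) := by group
    _ = x⁻¹ * y⁻¹ * x * (z * (y * z)) := by rw [hz y]
    _ = x⁻¹ * y⁻¹ * x * (z * y) * z := by group
    _ = x⁻¹ * y⁻¹ * x * (y * z) * z := by rw [hz y]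
    _ = pcomm x y * (z * z) := by unfold pcomm; group

lemma ocomm_eq (hGZ : commutator G = Subgroup.center G) (x y : G) :
    ocomm (deltaSigma σ) x y = pcomm x y * (deltaSigma σ x y) ^ 2 := by
  have hz := deltaSigma_comm σ hGZ x y
  have e1 : deltaSigma σ x⁻¹ y⁻¹ = deltaSigma σ x y :=
    deltaSigma_congr σ (pcomm_inv_inv hGZ x y)
  have e2 : deltaSigma σ (x⁻¹ * y⁻¹ * deltaSigma σ x y) x = deltaSigma σ x y := by
    apply deltaSigma_congr
    rw [pcomm_mul_left_central hz, pcomm_mul_left hGZ, pcomm_self_inv,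
        pcomm_inv_left hGZ, pcomm_swap, one_mul, inv_inv]
  have e3 : deltaSigma σ (x⁻¹ * y⁻¹ * deltaSigma σ x y * x * deltaSigma σ x y) y = 1 := by
    apply deltaSigma_eq_one
    rw [pcomm_mul_left_central hz, pcomm_mul_left hGZ, pcomm_mul_left_central hz,
        pcomm_mul_left hGZ, pcomm_self_inv, pcomm_inv_left hGZ]
    group
  calc ocomm (deltaSigma σ) x y
      = x⁻¹ * y⁻¹ * deltaSigma σ x y * x * deltaSigma σ x y * y * 1 := by
        unfold ocomm circ
        rw [oinv_eq σ x, oinv_eq σ y, e1, e2, e3]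
    _ = pcomm x y * (deltaSigma σ x y) ^ 2 := central_word x y _ hz

lemma tau_ocomm (hGZ : commutator G = Subgroup.center G) (x y : G) :
    (↑(tauFun σ ⟨pcomm x y, pcomm_mem_commutator x y⟩) : G) = ocomm (deltaSigma σ) x y := by
  rw [ocomm_eq σ hGZ]
  simp only [tauFun, Subgroup.coe_mul, SubgroupClass.coe_pow]
  rfl

lemma tau_hom (hGZ : commutator G = Subgroup.center G) (z w : ↥(commutator G)) :
    tauFun σ (z * w) = tauFun σ z * tauFun σ w := by
  have hcomm : ∀ a b : ↥(commutator G), a * b = b * a := fun a b =>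
    Subtype.ext (central_mul_comm hGZ a.2 ↑b)
  have h1 : Commute (σ z) (σ w) := hcomm (σ z) (σ w)
  have h2 : Commute w (σ z ^ 2) := hcomm w (σ z ^ 2)
  unfold tauFun
  rw [map_mul, h1.mul_pow, h2.mul_mul_mul_comm]

lemma circ_eq_mul_of_left_mem (hGZ : commutator G = Subgroup.center G) {a : G}
    (ha : a ∈ commutator G) (b : G) : circ (deltaSigma σ) a b = a * b := by
  unfold circ
  rw [deltaSigma_eq_one σ (pcomm_central_left (central_mul_comm hGZ ha) b), mul_one]

lemma tau_one : tauFun σ 1 = 1 := by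
  unfold tauFun; rw [map_one, one_pow, mul_one]

lemma tau_inv (hGZ : commutator G = Subgroup.center G) (z : ↥(commutator G)) :
    tauFun σ z⁻¹ = (tauFun σ z)⁻¹ := by
  have h := tau_hom σ hGZ z z⁻¹
  rw [mul_inv_cancel, tau_one] at h
  exact (inv_eq_of_mul_eq_one_right h.symm).symm

end Stmt15Aux

open Stmt15Aux in
open scoped commutatorElement in
/-- let `σ` be an endomorphism of `G'` such that `τ : z ↦ z·σ(z)²` is an
automorphism of `G'`, and let `x ∘ y = x·y·σ([x, y])`.  Then `G` and `(G, ∘)` are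
isoclinic: `Z(G, ∘) = Z(G) = G'`, `(G, ∘)' = G'`, the identity map induces an isomorphism
`G/Z(G) → (G, ∘)/Z(G, ∘)`, and `τ` is an isomorphism `G' → (G, ∘)'` with
`τ([x, y]) = [x, y]_∘`. -/
theorem stmt_15 {p : ℕ} (hp : p.Prime) (hodd : Odd p)
    {G : Type*} [Group G] [Fintype G] (hpG : IsPGroup p G)
    (hc2 : (⊤ : Subgroup G).lowerCentralSeries 2 = ⊥) (hc1 : (⊤ : Subgroup G).lowerCentralSeries 1 ≠ ⊥)
    (hGZ : commutator G = Subgroup.center G)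
    (σ : ↥(commutator G) →* ↥(commutator G))
    (hτ : Function.Bijective (tauFun σ)) :
    -- `Z(G, ∘) = Z(G) = G'`
    ({x : G | ∀ y : G, circ (deltaSigma σ) x y = circ (deltaSigma σ) y x} =
        (Subgroup.center G : Set G)) ∧
    (Subgroup.center G : Set G) = (commutator G : Set G) ∧
    -- `(G, ∘)' = G'`
    circDer (deltaSigma σ) = (commutator G : Set G) ∧
    -- the identity map induces an isomorphism `G/Z(G) → (G, ∘)/Z(G, ∘)`:
    -- `∘` agrees with the multiplication of `G` modulo the (common) center
    (∀ x y : G, circ (deltaSigma σ) x y * (x * y)⁻¹ ∈ Subgroup.center G) ∧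
    -- `x⁻¹·σ([x,x])` really is the `∘`-inverse of `x`
    (∀ x : G, circ (deltaSigma σ) x (oinv (deltaSigma σ) x) = 1 ∧
      circ (deltaSigma σ) (oinv (deltaSigma σ) x) x = 1) ∧
    -- `τ` is a homomorphism, hence (being bijective onto `(G, ∘)' = G'`, where `∘`
    -- coincides with the multiplication of `G`) an isomorphism `G' → (G, ∘)'`
    (∀ z w : ↥(commutator G), tauFun σ (z * w) = tauFun σ z * tauFun σ w) ∧
    (∀ z w : ↥(commutator G),
      circ (deltaSigma σ) (↑(tauFun σ z)) (↑(tauFun σ w)) = ↑(tauFun σ z) * ↑(tauFun σ w)) ∧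
    -- compatibility with commutators: `τ([x, y]) = [x, y]_∘`
    (∀ x y : G,
      (↑(tauFun σ ⟨pcomm x y, pcomm_mem_commutator x y⟩) : G) = ocomm (deltaSigma σ) x y) := by
  
  -- pcomm x g = 1 from τ-injectivity will be used in part 1
  have hpc_one : ∀ x g : G, pcomm x g * (deltaSigma σ x g) ^ 2 = 1 → pcomm x g = 1 := by
    intro x g hone
    have h2 : tauFun σ ⟨pcomm x g, pcomm_mem_commutator x g⟩ = tauFun σ 1 := by
      rw [tau_one]
      apply Subtype.coe_injective
      simp only [tauFun, Subgroup.coe_mul, SubgroupClass.coe_pow, OneMemClass.coe_one]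
      exact hone
    have h3 := hτ.1 h2
    exact congrArg Subtype.val h3
  refine ⟨?_, ?_, ?_, ?_, ?_, tau_hom σ hGZ, ?_, tau_ocomm σ hGZ⟩
  · -- Z(G,∘) = Z(G)
    ext x
    simp only [Set.mem_setOf_eq, SetLike.mem_coe]
    constructor
    · intro hx
      apply Subgroup.mem_center_iff.mpr
      intro g
      have h1 := hx g
      simp only [circ] at h1
      rw [deltaSigma_swap σ x g] at h1
      have hone : pcomm x g * (deltaSigma σ x g) ^ 2 = 1 := by
        calc pcomm x g * (deltaSigma σ x g) ^ 2
            = (g * x)⁻¹ * (x * g * deltaSigma σ x g) * deltaSigma σ x g := by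
              unfold pcomm; rw [sq]; group
          _ = (g * x)⁻¹ * (g * x * (deltaSigma σ x g)⁻¹) * deltaSigma σ x g := by rw [h1]
          _ = 1 := by group
      have h4 := hpc_one x g hone
      have h5 : g * x * pcomm x g = x * g := by unfold pcomm; group
      rw [h4, mul_one] at h5
      exact h5
    · intro hx y
      have hxc : ∀ g : G, x * g = g * x := fun g => (Subgroup.mem_center_iff.mp hx g).symm
      simp only [circ]
      rw [deltaSigma_eq_one σ (pcomm_central_left hxc y),
          deltaSigma_eq_one σ (by rw [pcomm_swap, pcomm_central_left hxc y, inv_one]),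
          mul_one, mul_one, hxc y]
  · exact congrArg SetLike.coe hGZ.symm
  · -- circDer = commutator
    apply Set.Subset.antisymm
    · intro g hg
      refine hg (commutator G : Set G) ⟨?_, ?_, ?_⟩
      · intro x y
        rw [SetLike.mem_coe, ocomm_eq σ hGZ]
        exact mul_mem (pcomm_mem_commutator x y) (pow_mem (deltaSigma_mem σ x y) 2)
      · intro a ha b hb
        simp only [SetLike.mem_coe] at *
        exact mul_mem (mul_mem ha hb) (deltaSigma_mem σ a b)
      · intro a ha
        simp only [SetLike.mem_coe] at *
        exact mul_mem (inv_mem ha) (deltaSigma_mem σ a a)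
    · intro g hg
      rw [SetLike.mem_coe] at hg
      intro T hT
      obtain ⟨hT1, hT2, hT3⟩ := hT
      have h1T : (1 : G) ∈ T := by
        have h := hT1 1 1
        rwa [ocomm_eq σ hGZ, pcomm_one_left, deltaSigma_eq_one σ (pcomm_one_left 1),
          one_pow, mul_one] at h
      have key : ∀ z : G, z ∈ Subgroup.closure (commutatorSet G) →
          ∀ hz : z ∈ commutator G, (↑(tauFun σ ⟨z, hz⟩) : G) ∈ T := by
        intro z hzc
        induction hzc using Subgroup.closure_induction with
        | mem u hu =>
          intro hz
          obtain ⟨a, b, rfl⟩ := hu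
          have hpc : pcomm a⁻¹ b⁻¹ = ⁅a, b⁆ := by
            unfold pcomm; rw [commutatorElement_def]; group
          have hsub : (⟨⁅a, b⁆, hz⟩ : ↥(commutator G))
              = ⟨pcomm a⁻¹ b⁻¹, pcomm_mem_commutator a⁻¹ b⁻¹⟩ := Subtype.ext hpc.symm
          rw [hsub, tau_ocomm σ hGZ]
          exact hT1 a⁻¹ b⁻¹
        | one =>
          intro hz
          have : (⟨(1 : G), hz⟩ : ↥(commutator G)) = 1 := rfl
          rw [this, tau_one, OneMemClass.coe_one]
          exact h1T
        | mul u v hu hv ihu ihv =>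
          intro hz
          rw [← commutator_eq_closure] at hu hv
          have hmul : (⟨u * v, hz⟩ : ↥(commutator G)) = ⟨u, hu⟩ * ⟨v, hv⟩ := rfl
          rw [hmul, tau_hom σ hGZ, Subgroup.coe_mul]
          have hcirc : circ (deltaSigma σ) (↑(tauFun σ ⟨u, hu⟩)) (↑(tauFun σ ⟨v, hv⟩))
              = ↑(tauFun σ ⟨u, hu⟩) * ↑(tauFun σ ⟨v, hv⟩) :=
            circ_eq_mul_of_left_mem σ hGZ (tauFun σ ⟨u, hu⟩).2 _
          rw [← hcirc]
          exact hT2 _ (ihu hu) _ (ihv hv)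
        | inv u hu ihu =>
          intro hz
          rw [← commutator_eq_closure] at hu
          have hinv : (⟨u⁻¹, hz⟩ : ↥(commutator G)) = (⟨u, hu⟩)⁻¹ := rfl
          rw [hinv, tau_inv σ hGZ, InvMemClass.coe_inv]
          have hoinv : oinv (deltaSigma σ) (↑(tauFun σ ⟨u, hu⟩))
              = (↑(tauFun σ ⟨u, hu⟩) : G)⁻¹ := oinv_eq σ _
          rw [← hoinv]
          exact hT3 _ (ihu hu)
      obtain ⟨z, hz⟩ := hτ.2 ⟨g, hg⟩
      have hgz : g = ↑(tauFun σ z) := (congrArg Subtype.val hz).symm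
      rw [hgz]
      have := key ↑z (by rw [← commutator_eq_closure]; exact z.2) z.2
      simpa using this
  · intro x y
    have h : circ (deltaSigma σ) x y * (x * y)⁻¹ = deltaSigma σ x y := by
      simp only [circ, mul_inv_rev]
      calc x * y * deltaSigma σ x y * (y⁻¹ * x⁻¹)
          = x * (y * (deltaSigma σ x y * y⁻¹) * x⁻¹) := by group
        _ = x * (y * (y⁻¹ * deltaSigma σ x y) * x⁻¹) := by rw [deltaSigma_comm σ hGZ x y y⁻¹]
        _ = x * (deltaSigma σ x y * x⁻¹) := by group
        _ = x * (x⁻¹ * deltaSigma σ x y) := by rw [deltaSigma_comm σ hGZ x y x⁻¹]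
        _ = deltaSigma σ x y := by group
    rw [h, ← hGZ]
    exact deltaSigma_mem σ x y
  · intro x
    constructor
    · rw [oinv_eq σ x]
      unfold circ
      rw [deltaSigma_eq_one σ (pcomm_inv_self x), mul_one, mul_inv_cancel]
    · rw [oinv_eq σ x]
      unfold circ
      rw [deltaSigma_eq_one σ (pcomm_self_inv x), mul_one, inv_mul_cancel]
  · intro z w
    exact circ_eq_mul_of_left_mem σ hGZ (tauFun σ z).2 _
end

section
/- Let p be an odd prime, let n ≥ 2 be an integer, and let G be a finite p-group of nilpotency class two with G' = Z(G), generated by elements x₁, …, x_n, such that G/G' is elementary abelian of order p^n with the images of x₁, …, x_n as an F_p-basis, and G' is elementary abelian of order p^{n(n−1)/2} with the commutators [x_j, x_k] (1 ≤ j < k ≤ n) as an F_p-basis. Then a map Δ: G × G → G' is an anti-symmetric bilinear form on G if and only if there exists an endomorphism σ of G' such that Δ(x, y) = σ([x, y]) for all x, y ∈ G. -/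
section Aux
variable {G : Type*} [Group G]
theorem pcomm_swap (a b : G) : pcomm b a = (pcomm a b)⁻¹ := by unfold pcomm; group
theorem pcomm_central_left {w : G} (hw : ∀ h, h * w = w * h) (b : G) : pcomm w b = 1 := by
  unfold pcomm
  rw [mul_assoc w⁻¹ b⁻¹ w, hw b⁻¹]; group
theorem pcomm_central_right {w : G} (hw : ∀ h, h * w = w * h) (b : G) : pcomm b w = 1 := by
  rw [pcomm_swap, pcomm_central_left hw, inv_one]
theorem pcomm_mul_left (hcen : ∀ a b h : G, h * pcomm a b = pcomm a b * h) (a b c : G) :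
    pcomm (a * b) c = pcomm a c * pcomm b c := by
  have h1 : pcomm (a * b) c = b⁻¹ * pcomm a c * (c⁻¹ * b * c) := by unfold pcomm; group
  rw [h1, hcen a c b⁻¹]; unfold pcomm; group
theorem pcomm_mul_right (hcen : ∀ a b h : G, h * pcomm a b = pcomm a b * h) (a b c : G) :
    pcomm a (b * c) = pcomm a b * pcomm a c := by
  rw [pcomm_swap (b * c) a, pcomm_mul_left hcen, mul_inv_rev, ← pcomm_swap c a, ← pcomm_swap b a]
  exact (hcen a c (pcomm a b)).symm

-- generic bilinear lemmas
variable {B : G → G → G}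

theorem bil_one_left (hadd : ∀ x₁ x₂ y : G, B (x₁ * x₂) y = B x₁ y * B x₂ y) (b : G) :
    B 1 b = 1 := by
  have h := hadd 1 1 b
  rw [mul_one] at h
  exact left_eq_mul.mp h

theorem bil_one_right (hadd : ∀ x y₁ y₂ : G, B x (y₁ * y₂) = B x y₁ * B x y₂) (b : G) :
    B b 1 = 1 := by
  have h := hadd b 1 1
  rw [mul_one] at h
  exact left_eq_mul.mp h

theorem bil_pow_left (hadd : ∀ x₁ x₂ y : G, B (x₁ * x₂) y = B x₁ y * B x₂ y) (a b : G)
    (m : ℕ) : B (a ^ m) b = (B a b) ^ m := by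
  induction m with
  | zero => simpa using bil_one_left hadd b
  | succ k ih => rw [pow_succ, hadd, ih, pow_succ]

theorem bil_pow_right (hadd : ∀ x y₁ y₂ : G, B x (y₁ * y₂) = B x y₁ * B x y₂) (a b : G)
    (m : ℕ) : B a (b ^ m) = (B a b) ^ m := by
  induction m with
  | zero => simpa using bil_one_right hadd a
  | succ k ih => rw [pow_succ, hadd, ih, pow_succ]

theorem bil_prod_left (hadd : ∀ x₁ x₂ y : G, B (x₁ * x₂) y = B x₁ y * B x₂ y)
    (l : List G) (b : G) : B l.prod b = (l.map (fun g => B g b)).prod := by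
  induction l with
  | nil => simpa using bil_one_left hadd b
  | cons a l ih => simp [hadd, ih]

theorem bil_prod_right (hadd : ∀ x y₁ y₂ : G, B x (y₁ * y₂) = B x y₁ * B x y₂)
    (l : List G) (b : G) : B b l.prod = (l.map (fun g => B b g)).prod := by
  induction l with
  | nil => simpa using bil_one_right hadd b
  | cons a l ih => simp [hadd, ih]

-- helpers
theorem pow_val_mod {p : ℕ} [NeZero p] (c : G) (hc : c ^ p = 1) (m : ℕ) :
    c ^ (m % p) = c ^ m := by
  conv_rhs => rw [← Nat.mod_add_div m p]
  rw [pow_add, pow_mul, hc, one_pow, mul_one]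

theorem pow_val_add {p : ℕ} [NeZero p] (c : G) (hc : c ^ p = 1) (a b : ZMod p) :
    c ^ ((a + b).val) = c ^ a.val * c ^ b.val := by
  rw [ZMod.val_add, pow_val_mod c hc, pow_add]

theorem prod_map_mul_central {α : Type*} (l : List α) (f g : α → G)
    (hg : ∀ a h, h * g a = g a * h) :
    (l.map (fun a => f a * g a)).prod = (l.map f).prod * (l.map g).prod := by
  induction l with
  | nil => simp
  | cons a l ih =>
    simp only [List.map_cons, List.prod_cons, ih, ← mul_assoc]
    congr 1
    rw [mul_assoc, ← hg, ← mul_assoc]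

theorem prod_map_ite_not {α : Type*} [DecidableEq α] (l : List α) {q₀ : α} (hq : q₀ ∉ l)
    (c : α → G) : (l.map (fun q => if q = q₀ then c q else 1)).prod = 1 := by
  apply List.prod_eq_one
  intro y hy
  simp only [List.mem_map] at hy
  obtain ⟨a, ha, rfl⟩ := hy
  have : a ≠ q₀ := fun h => hq (h ▸ ha)
  simp [this]

theorem prod_map_ite_eq {α : Type*} [DecidableEq α] (l : List α) (hl : l.Nodup) {q₀ : α}
    (hq : q₀ ∈ l) (c : α → G) :
    (l.map (fun q => if q = q₀ then c q else 1)).prod = c q₀ := by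
  induction l with
  | nil => simp at hq
  | cons a l ih =>
    simp only [List.map_cons, List.prod_cons]
    rcases List.mem_cons.mp hq with h | h
    · subst h
      rw [if_pos rfl, prod_map_ite_not l (List.nodup_cons.mp hl).1, mul_one]
    · have hne : a ≠ q₀ := by
        rintro rfl; exact (List.nodup_cons.mp hl).1 h
      rw [if_neg hne, one_mul]
      exact ih (List.nodup_cons.mp hl).2 h
end Aux

theorem bil_vanish {G : Type*} [Group G] {p n : ℕ} (N : Subgroup G)
    (x : Fin n → G)
    (hQ : ∀ g : G, ∃ e : Fin n → ZMod p, ∃ w ∈ N,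
      g = ((List.finRange n).map (fun i => x i ^ (e i).val)).prod * w)
    {B : G → G → G}
    (hBl : ∀ x₁ x₂ y : G, B (x₁ * x₂) y = B x₁ y * B x₂ y)
    (hBr : ∀ x y₁ y₂ : G, B x (y₁ * y₂) = B x y₁ * B x y₂)
    (hBwl : ∀ a b w : G, w ∈ N → B (a * w) b = B a b)
    (hBwr : ∀ a b w : G, w ∈ N → B a (b * w) = B a b)
    (hgen : ∀ i j, B (x i) (x j) = 1) :
    ∀ a b : G, B a b = 1 := by
  have key : ∀ (i : Fin n) (b : G), B (x i) b = 1 := by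
    intro i b
    obtain ⟨β, w', hw', rfl⟩ := hQ b
    rw [hBwr _ _ _ hw', bil_prod_right hBr]
    apply List.prod_eq_one
    intro y hy
    simp only [List.map_map, List.mem_map, Function.comp] at hy
    obtain ⟨j, -, rfl⟩ := hy
    rw [bil_pow_right hBr, hgen, one_pow]
  intro a b
  obtain ⟨α, w, hw, rfl⟩ := hQ a
  rw [hBwl _ _ _ hw, bil_prod_left hBl]
  apply List.prod_eq_one
  intro y hy
  simp only [List.map_map, List.mem_map, Function.comp] at hy
  obtain ⟨i, -, rfl⟩ := hy
  rw [bil_pow_left hBl, key, one_pow]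

theorem mk_list_prod {G : Type*} [Group G] (N : Subgroup G) [N.Normal] (l : List G) :
    ((l.prod : G) : G ⧸ N) = (l.map (QuotientGroup.mk : G → G ⧸ N)).prod := by
  induction l with
  | nil => simp
  | cons a l ih => simp [ih]


/-- let `G` be a finite `p`-group of class two with `G' = Z(G)`, generated
by `x₁, …, x_n`, with `G/G'` elementary abelian of order `p^n` having the images of the
`xᵢ` as an `F_p`-basis and `G'` elementary abelian of order `p^{n(n-1)/2}` having the
commutators `[x_j, x_k]` (`j < k`) as an `F_p`-basis.  Then a map `Δ : G × G → G'` is an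
anti-symmetric bilinear form on `G` if and only if `Δ(x, y) = σ([x, y])` for some
endomorphism `σ` of `G'`. -/
theorem stmt_18 {p n : ℕ} (hp : p.Prime) (hodd : Odd p) (hn : 2 ≤ n)
    {G : Type*} [Group G] [Fintype G] (hpG : IsPGroup p G)
    (hc2 : (⊤ : Subgroup G).lowerCentralSeries 2 = ⊥) (hc1 : (⊤ : Subgroup G).lowerCentralSeries 1 ≠ ⊥)
    (hGZ : commutator G = Subgroup.center G)
    (x : Fin n → G) (hgen : Subgroup.closure (Set.range x) = ⊤)
    -- `G/G'` is elementary abelian of order `p^n` …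
    (hQcard : Nat.card (G ⧸ commutator G) = p ^ n)
    (hQexp : ∀ g : G, ((g : G ⧸ commutator G)) ^ p = 1)
    -- … with the images of `x₁, …, x_n` as an `F_p`-basis
    (hQbasis : ∀ q : G ⧸ commutator G, ∃! e : Fin n → ZMod p,
      q = (((List.finRange n).map
        (fun i => ((x i : G ⧸ commutator G)) ^ (e i).val)).prod))
    -- `G'` is elementary abelian of order `p^{n(n-1)/2}` …
    (hDcard : Nat.card ↥(commutator G) = p ^ (n * (n - 1) / 2))
    (hDexp : ∀ g ∈ commutator G, g ^ p = 1)
    -- … with the commutators `[x_j, x_k]`, `j < k`, as an `F_p`-basis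
    (hDbasis : ∀ g ∈ commutator G,
      ∃! e : {q : Fin n × Fin n // q.1 < q.2} → ZMod p,
        g = (((Finset.univ : Finset {q : Fin n × Fin n // q.1 < q.2}).toList.map
          (fun q => (pcomm (x q.1.1) (x q.1.2)) ^ (e q).val)).prod)) :
    ∀ Δ : G → G → G,
      (IsBilinearForm Δ ∧ ∀ a b : G, Δ b a = (Δ a b)⁻¹) ↔
      ∃ σ : ↥(commutator G) →* ↥(commutator G),
        ∀ a b : G, Δ a b = ↑(σ ⟨pcomm a b, pcomm_mem_commutator a b⟩) := by
  haveI : Fact p.Prime := ⟨hp⟩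
  haveI : Fact (1 < p) := ⟨hp.one_lt⟩
  have hcen : ∀ w ∈ commutator G, ∀ h : G, h * w = w * h := fun w hw h =>
    Subgroup.mem_center_iff.mp (hGZ ▸ hw) h
  have hcenp : ∀ a b h : G, h * pcomm a b = pcomm a b * h := fun a b h =>
    hcen _ (pcomm_mem_commutator a b) h
  have hQ : ∀ g : G, ∃ e : Fin n → ZMod p, ∃ w ∈ commutator G,
      g = ((List.finRange n).map (fun i => x i ^ (e i).val)).prod * w := by
    intro g
    obtain ⟨e, he, -⟩ := hQbasis (g : G ⧸ commutator G)
    refine ⟨e, _, ?_, (mul_inv_cancel_left _ g).symm⟩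
    rw [← QuotientGroup.eq, he, mk_list_prod, List.map_map]
    congr 1
  intro Δ
  constructor
  · rintro ⟨⟨hmem, hwl, hwr, hml, hmr⟩, hanti⟩
    classical
    set L := (Finset.univ : Finset {q : Fin n × Fin n // q.1 < q.2}).toList with hLdef
    set C : {q : Fin n × Fin n // q.1 < q.2} → G :=
      fun q => pcomm (x q.1.1) (x q.1.2) with hCdef
    set D : {q : Fin n × Fin n // q.1 < q.2} → G :=
      fun q => Δ (x q.1.1) (x q.1.2) with hDdef
    have hCp : ∀ q, C q ^ p = 1 := fun q => hDexp _ (pcomm_mem_commutator _ _)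
    have hDp : ∀ q, D q ^ p = 1 := fun q => hDexp _ (hmem _ _)
    have hDb : ∀ g : ↥(commutator G), ∃! e : {q : Fin n × Fin n // q.1 < q.2} → ZMod p,
        (g : G) = ((L.map (fun q => C q ^ ((e q).val))).prod) := fun g => hDbasis g g.2
    choose E hE hEu using hDb
    -- the candidate endomorphism
    have hσmem : ∀ (e : {q : Fin n × Fin n // q.1 < q.2} → ZMod p),
        ((L.map (fun q => D q ^ ((e q).val))).prod) ∈ commutator G := by
      intro e
      apply Subgroup.list_prod_mem
      intro c hc
      simp only [List.mem_map] at hc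
      obtain ⟨q, -, rfl⟩ := hc
      exact Subgroup.pow_mem _ (hmem _ _) _
    set σ₀ : ↥(commutator G) → ↥(commutator G) :=
      fun g => ⟨(L.map (fun q => D q ^ ((E g q).val))).prod, hσmem _⟩ with hσ₀def
    have hadd : ∀ g h : ↥(commutator G), E (g * h) = E g + E h := by
      intro g h
      refine (hEu (g * h) (E g + E h) ?_).symm
      show ((g * h : ↥(commutator G)) : G) = (L.map (fun q => C q ^ (((E g + E h) q).val))).prod
      have h1 : (L.map (fun q => C q ^ (((E g + E h) q).val))).prod
          = (L.map (fun q => C q ^ ((E g q).val) * C q ^ ((E h q).val))).prod := by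
        exact congrArg List.prod (congrArg (fun f => List.map f L)
          (funext fun q => pow_val_add (C q) (hCp q) _ _))
      rw [h1, prod_map_mul_central L _ _
        (fun q h' => hcen _ (Subgroup.pow_mem _ (pcomm_mem_commutator _ _) _) h'),
        ← hE g, ← hE h]
      rfl
    have hmul : ∀ g h : ↥(commutator G), σ₀ (g * h) = σ₀ g * σ₀ h := by
      intro g h
      apply Subtype.ext
      show (L.map (fun q => D q ^ ((E (g * h) q).val))).prod = _
      rw [hadd]
      have h1 : (L.map (fun q => D q ^ (((E g + E h) q).val))).prod
          = (L.map (fun q => D q ^ ((E g q).val) * D q ^ ((E h q).val))).prod := by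
        exact congrArg List.prod (congrArg (fun f => List.map f L)
          (funext fun q => pow_val_add (D q) (hDp q) _ _))
      rw [h1, prod_map_mul_central L _ _
        (fun q h' => hcen _ (Subgroup.pow_mem _ (hmem _ _) _) h')]
      rfl
    set σ : ↥(commutator G) →* ↥(commutator G) := MonoidHom.mk' σ₀ hmul with hσdef
    -- σ sends the basic commutators to the corresponding Δ-values
    have hσxx : ∀ q₀ : {q : Fin n × Fin n // q.1 < q.2},
        (↑(σ ⟨C q₀, pcomm_mem_commutator _ _⟩) : G) = D q₀ := by
      intro q₀
      have hrep : ((⟨C q₀, pcomm_mem_commutator _ _⟩ : ↥(commutator G)) : G) =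
          (L.map (fun q => C q ^ (((fun q => if q = q₀ then (1 : ZMod p) else 0) q).val))).prod := by
        have h1 : (L.map (fun q => C q ^ (((fun q => if q = q₀ then (1 : ZMod p) else 0) q).val))).prod
            = (L.map (fun q => if q = q₀ then C q else 1)).prod := by
          refine congrArg List.prod (congrArg (fun f => List.map f L) (funext fun q => ?_))
          by_cases hq : q = q₀ <;> simp [hq, ZMod.val_one]
        rw [h1, prod_map_ite_eq L (Finset.nodup_toList _) (by simp [hLdef]) C]
      have hEe : E ⟨C q₀, pcomm_mem_commutator _ _⟩ = fun q => if q = q₀ then 1 else 0 :=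
        (hEu _ _ hrep).symm
      show (L.map (fun q => D q ^ ((E ⟨C q₀, pcomm_mem_commutator _ _⟩ q).val))).prod = D q₀
      rw [hEe]
      have h1 : (L.map (fun q => D q ^ (((fun q => if q = q₀ then (1 : ZMod p) else 0) q).val))).prod
          = (L.map (fun q => if q = q₀ then D q else 1)).prod := by
        refine congrArg List.prod (congrArg (fun f => List.map f L) (funext fun q => ?_))
        by_cases hq : q = q₀ <;> simp [hq, ZMod.val_one]
      rw [h1, prod_map_ite_eq L (Finset.nodup_toList _) (by simp [hLdef]) D]
    -- the comparison form
    set B : G → G → G :=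
      fun a b => Δ a b * (↑(σ ⟨pcomm a b, pcomm_mem_commutator a b⟩))⁻¹ with hBdef
    have hsmem : ∀ t : ↥(commutator G), (↑(σ t) : G) ∈ commutator G := fun t => (σ t).2
    have hBmem : ∀ a b : G, B a b ∈ commutator G :=
      fun a b => mul_mem (hmem a b) (inv_mem (hsmem _))
    have hBl : ∀ a₁ a₂ b : G, B (a₁ * a₂) b = B a₁ b * B a₂ b := by
      intro a₁ a₂ b
      have h1 : (⟨pcomm (a₁ * a₂) b, pcomm_mem_commutator _ _⟩ : ↥(commutator G)) =
          ⟨pcomm a₁ b, pcomm_mem_commutator a₁ b⟩ * ⟨pcomm a₂ b, pcomm_mem_commutator a₂ b⟩ :=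
        Subtype.ext (pcomm_mul_left hcenp a₁ a₂ b)
      show Δ (a₁ * a₂) b * _ = _
      rw [hml, h1, map_mul]
      have hc1 : ∀ h : G, h * (↑(σ ⟨pcomm a₁ b, pcomm_mem_commutator a₁ b⟩) : G)⁻¹
          = (↑(σ ⟨pcomm a₁ b, pcomm_mem_commutator a₁ b⟩) : G)⁻¹ * h :=
        fun h => hcen _ (inv_mem (hsmem _)) h
      show Δ a₁ b * Δ a₂ b *
          ((↑(σ ⟨pcomm a₁ b, pcomm_mem_commutator a₁ b⟩) : G) *
           (↑(σ ⟨pcomm a₂ b, pcomm_mem_commutator a₂ b⟩) : G))⁻¹ = _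
      rw [mul_inv_rev]
      calc Δ a₁ b * Δ a₂ b *
            ((↑(σ ⟨pcomm a₂ b, pcomm_mem_commutator a₂ b⟩) : G)⁻¹ *
             (↑(σ ⟨pcomm a₁ b, pcomm_mem_commutator a₁ b⟩) : G)⁻¹)
          = Δ a₁ b * ((Δ a₂ b * (↑(σ ⟨pcomm a₂ b, pcomm_mem_commutator a₂ b⟩) : G)⁻¹) *
             (↑(σ ⟨pcomm a₁ b, pcomm_mem_commutator a₁ b⟩) : G)⁻¹) := by group
        _ = Δ a₁ b * ((↑(σ ⟨pcomm a₁ b, pcomm_mem_commutator a₁ b⟩) : G)⁻¹ *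
             (Δ a₂ b * (↑(σ ⟨pcomm a₂ b, pcomm_mem_commutator a₂ b⟩) : G)⁻¹)) := by
            rw [hc1]
        _ = _ := by rw [← mul_assoc]
    have hBr : ∀ a b₁ b₂ : G, B a (b₁ * b₂) = B a b₁ * B a b₂ := by
      intro a b₁ b₂
      have h1 : (⟨pcomm a (b₁ * b₂), pcomm_mem_commutator _ _⟩ : ↥(commutator G)) =
          ⟨pcomm a b₁, pcomm_mem_commutator a b₁⟩ * ⟨pcomm a b₂, pcomm_mem_commutator a b₂⟩ :=
        Subtype.ext (pcomm_mul_right hcenp a b₁ b₂)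
      show Δ a (b₁ * b₂) * _ = _
      rw [hmr, h1, map_mul]
      have hc1 : ∀ h : G, h * (↑(σ ⟨pcomm a b₁, pcomm_mem_commutator a b₁⟩) : G)⁻¹
          = (↑(σ ⟨pcomm a b₁, pcomm_mem_commutator a b₁⟩) : G)⁻¹ * h :=
        fun h => hcen _ (inv_mem (hsmem _)) h
      show Δ a b₁ * Δ a b₂ *
          ((↑(σ ⟨pcomm a b₁, pcomm_mem_commutator a b₁⟩) : G) *
           (↑(σ ⟨pcomm a b₂, pcomm_mem_commutator a b₂⟩) : G))⁻¹ = _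
      rw [mul_inv_rev]
      calc Δ a b₁ * Δ a b₂ *
            ((↑(σ ⟨pcomm a b₂, pcomm_mem_commutator a b₂⟩) : G)⁻¹ *
             (↑(σ ⟨pcomm a b₁, pcomm_mem_commutator a b₁⟩) : G)⁻¹)
          = Δ a b₁ * ((Δ a b₂ * (↑(σ ⟨pcomm a b₂, pcomm_mem_commutator a b₂⟩) : G)⁻¹) *
             (↑(σ ⟨pcomm a b₁, pcomm_mem_commutator a b₁⟩) : G)⁻¹) := by group
        _ = Δ a b₁ * ((↑(σ ⟨pcomm a b₁, pcomm_mem_commutator a b₁⟩) : G)⁻¹ *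
             (Δ a b₂ * (↑(σ ⟨pcomm a b₂, pcomm_mem_commutator a b₂⟩) : G)⁻¹)) := by
            rw [hc1]
        _ = _ := by rw [← mul_assoc]
    have hBwl : ∀ a b w : G, w ∈ commutator G → B (a * w) b = B a b := by
      intro a b w hw
      have h1 : pcomm (a * w) b = pcomm a b := by
        rw [pcomm_mul_left hcenp, pcomm_central_left (hcen w hw) b, mul_one]
      have h2 : (⟨pcomm (a * w) b, pcomm_mem_commutator _ _⟩ : ↥(commutator G)) =
          ⟨pcomm a b, pcomm_mem_commutator a b⟩ := Subtype.ext h1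
      show Δ (a * w) b * _ = _
      rw [hwl _ _ _ hw, h2]
    have hBwr : ∀ a b w : G, w ∈ commutator G → B a (b * w) = B a b := by
      intro a b w hw
      have h1 : pcomm a (b * w) = pcomm a b := by
        rw [pcomm_mul_right hcenp, pcomm_central_right (hcen w hw) a, mul_one]
      have h2 : (⟨pcomm a (b * w), pcomm_mem_commutator _ _⟩ : ↥(commutator G)) =
          ⟨pcomm a b, pcomm_mem_commutator a b⟩ := Subtype.ext h1
      show Δ a (b * w) * _ = _
      rw [hwr _ _ _ hw, h2]
    have hBanti : ∀ a b : G, B b a = (B a b)⁻¹ := by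
      intro a b
      have h1 : (⟨pcomm b a, pcomm_mem_commutator b a⟩ : ↥(commutator G)) =
          (⟨pcomm a b, pcomm_mem_commutator a b⟩)⁻¹ := Subtype.ext (pcomm_swap a b)
      show Δ b a * _ = _
      rw [hanti, h1, map_inv]
      show (Δ a b)⁻¹ * ((↑(σ ⟨pcomm a b, pcomm_mem_commutator a b⟩) : G)⁻¹)⁻¹ =
        (Δ a b * (↑(σ ⟨pcomm a b, pcomm_mem_commutator a b⟩) : G)⁻¹)⁻¹
      rw [inv_inv, mul_inv_rev, inv_inv]
      exact hcen _ (hsmem _) _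
    have hBdiag : ∀ g : G, B g g = 1 := by
      intro g
      have h2 : (B g g) ^ 2 = 1 := by
        have h := hBanti g g
        rw [sq]
        nth_rewrite 2 [h]
        simp
      obtain ⟨m, hm⟩ := hodd
      have h3 : (B g g) ^ p = 1 := hDexp _ (hBmem g g)
      have h4 : (B g g) ^ p = B g g := by
        rw [hm, pow_succ, pow_mul, h2, one_pow, one_mul]
      exact h4.symm.trans h3
    have hBgen : ∀ i j : Fin n, B (x i) (x j) = 1 := by
      have key : ∀ i j : Fin n, i < j → B (x i) (x j) = 1 := by
        intro i j hij
        show Δ (x i) (x j) * _ = 1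
        have := hσxx ⟨(i, j), hij⟩
        rw [show (⟨pcomm (x i) (x j), pcomm_mem_commutator (x i) (x j)⟩ : ↥(commutator G)) =
          ⟨C ⟨(i, j), hij⟩, pcomm_mem_commutator _ _⟩ from rfl, this]
        exact mul_inv_cancel _ -- ?
      intro i j
      rcases lt_trichotomy i j with h | h | h
      · exact key i j h
      · subst h; exact hBdiag (x i)
      · rw [hBanti, key j i h, inv_one]
    have hvan := bil_vanish (commutator G) x hQ hBl hBr hBwl hBwr hBgen
    refine ⟨σ, fun a b => ?_⟩
    have h := hvan a b
    rw [hBdef] at h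
    exact mul_inv_eq_one.mp h
  · rintro ⟨σ, hσ⟩
    refine ⟨⟨fun a b => ?_, fun a b w hw => ?_, fun a b w hw => ?_,
      fun a₁ a₂ b => ?_, fun a b₁ b₂ => ?_⟩, fun a b => ?_⟩
    · rw [hσ]; exact (σ _).2
    · rw [hσ, hσ]
      have h1 : pcomm (a * w) b = pcomm a b := by
        rw [pcomm_mul_left hcenp, pcomm_central_left (hcen w hw) b, mul_one]
      exact congrArg _ (congrArg σ (Subtype.ext h1))
    · rw [hσ, hσ]
      have h1 : pcomm a (b * w) = pcomm a b := by
        rw [pcomm_mul_right hcenp, pcomm_central_right (hcen w hw) a, mul_one]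
      exact congrArg _ (congrArg σ (Subtype.ext h1))
    · rw [hσ, hσ, hσ]
      have h1 : (⟨pcomm (a₁ * a₂) b, pcomm_mem_commutator (a₁ * a₂) b⟩ : ↥(commutator G)) =
          ⟨pcomm a₁ b, pcomm_mem_commutator a₁ b⟩ * ⟨pcomm a₂ b, pcomm_mem_commutator a₂ b⟩ :=
        Subtype.ext (pcomm_mul_left hcenp a₁ a₂ b)
      rw [h1, map_mul]; rfl
    · rw [hσ, hσ, hσ]
      have h1 : (⟨pcomm a (b₁ * b₂), pcomm_mem_commutator a (b₁ * b₂)⟩ : ↥(commutator G)) =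
          ⟨pcomm a b₁, pcomm_mem_commutator a b₁⟩ * ⟨pcomm a b₂, pcomm_mem_commutator a b₂⟩ :=
        Subtype.ext (pcomm_mul_right hcenp a b₁ b₂)
      rw [h1, map_mul]; rfl
    · rw [hσ, hσ]
      have h1 : (⟨pcomm b a, pcomm_mem_commutator b a⟩ : ↥(commutator G)) =
          (⟨pcomm a b, pcomm_mem_commutator a b⟩)⁻¹ :=
        Subtype.ext (pcomm_swap a b)
      rw [h1, map_inv]; rfl
end
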